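/- arXiv:1002.0017 — 10 statements merged into one kernel-verified Lean document; each statement's English description precedes it below -/
import Mathlib

section
/- If two orthonormal bases E = (e_1,…,e_n) and F = (f_1,…,f_n) of ℂ^n are given, then E and F are mutually unbiased (|⟨e_k, f_j⟩| = 1/√n for all k,j) if and only if the maximal abelian subalgebras 𝒜_E = span{P_{e_j}} and 𝒜_F = span{P_{f_j}} of M_n(ℂ) are quasi-orthogonal. -/
open Matrix BigOperators

noncomputable section

abbrev Mat (n : ℕ) := Matrix (Fin n) (Fin n) ℂ

/-- Two unital *-subalgebras of `M_n(ℂ)` are quasi-orthogonal iff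
`τ(AB) = τ(A)τ(B)` for all members, where `τ = (1/n)Tr`. -/
def QuasiOrth {n : ℕ} (𝒜 ℬ : StarSubalgebra ℂ (Mat n)) : Prop :=
  ∀ A ∈ 𝒜, ∀ B ∈ ℬ, (n : ℂ) * (A * B).trace = A.trace * B.trace

/-- The rank-one orthogonal projection onto the line spanned by a unit vector `v`,
as a matrix. -/
def rankOneProj {n : ℕ} (v : EuclideanSpace ℂ (Fin n)) : Mat n :=
  Matrix.of fun i j => v i * (starRingEnd ℂ) (v j)

lemma trace_rankOneProj {n : ℕ} (v : EuclideanSpace ℂ (Fin n)) :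
    (rankOneProj v).trace = @inner ℂ _ _ v v := by
  simp only [Matrix.trace, Matrix.diag, rankOneProj, Matrix.of_apply,
    PiLp.inner_apply, RCLike.inner_apply]

lemma trace_mul_rankOneProj {n : ℕ} (v w : EuclideanSpace ℂ (Fin n)) :
    (rankOneProj v * rankOneProj w).trace
      = @inner ℂ _ _ v w * @inner ℂ _ _ w v := by
  classical
  simp only [Matrix.trace, Matrix.diag, Matrix.mul_apply, rankOneProj, Matrix.of_apply,
    PiLp.inner_apply, RCLike.inner_apply]
  rw [Finset.sum_mul_sum, Finset.sum_comm]
  exact Finset.sum_congr rfl fun i _ => Finset.sum_congr rfl fun j _ => by ring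

/-- two orthonormal bases of `ℂ^n` are mutually unbiased iff the
associated maximal abelian subalgebras are quasi-orthogonal. -/
theorem stmt1 {n : ℕ} (hn : 0 < n) (e f : Fin n → EuclideanSpace ℂ (Fin n))
    (he : Orthonormal ℂ e) (hf : Orthonormal ℂ f) :
    (∀ k j, ‖@inner ℂ _ _ (e k) (f j)‖ = 1 / Real.sqrt n) ↔
    (∀ A ∈ Submodule.span ℂ (Set.range fun j => rankOneProj (e j)),
      ∀ B ∈ Submodule.span ℂ (Set.range fun j => rankOneProj (f j)),
        (n : ℂ) * (A * B).trace = A.trace * B.trace) := by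
  have hee : ∀ k, @inner ℂ _ _ (e k) (e k) = 1 := fun k => by
    simpa using (orthonormal_iff_ite.mp he) k k
  have hff : ∀ k, @inner ℂ _ _ (f k) (f k) = 1 := fun k => by
    simpa using (orthonormal_iff_ite.mp hf) k k
  constructor
  · intro h
    have key : ∀ k j, (n : ℂ) * (rankOneProj (e k) * rankOneProj (f j)).trace
        = (rankOneProj (e k)).trace * (rankOneProj (f j)).trace := by
      intro k j
      rw [trace_mul_rankOneProj, trace_rankOneProj, trace_rankOneProj, hee, hff,
        ← inner_conj_symm (f j) (e k)]
      have hs : ((1 / Real.sqrt n) ^ 2 : ℝ) = 1 / n := by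
        rw [div_pow, one_pow, Real.sq_sqrt (Nat.cast_nonneg n)]
      have hn' : (n : ℂ) ≠ 0 := Nat.cast_ne_zero.mpr hn.ne'
      rw [Complex.mul_conj', h k j, ← Complex.ofReal_pow, hs]
      push_cast
      field_simp
    intro A hA B hB
    induction hA using Submodule.span_induction with
    | mem x hx =>
      obtain ⟨k, rfl⟩ := hx
      induction hB using Submodule.span_induction with
      | mem y hy => obtain ⟨j, rfl⟩ := hy; exact key k j
      | zero => simp
      | add y z _ _ hy hz =>
        rw [Matrix.mul_add, Matrix.trace_add, Matrix.trace_add, mul_add, mul_add, hy, hz]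
      | smul c y _ hy =>
        beta_reduce at hy
        rw [Matrix.mul_smul, Matrix.trace_smul, Matrix.trace_smul, smul_eq_mul, smul_eq_mul,
          mul_left_comm, hy]
        ring
    | zero => simp
    | add x y _ _ hx hy =>
      rw [Matrix.add_mul, Matrix.trace_add, Matrix.trace_add, mul_add, add_mul, hx, hy]
    | smul c x _ hx =>
      rw [Matrix.smul_mul, Matrix.trace_smul, Matrix.trace_smul, smul_eq_mul, smul_eq_mul,
        mul_left_comm, hx]
      ring
  · intro h k j
    have h1 := h (rankOneProj (e k)) (Submodule.subset_span ⟨k, rfl⟩)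
      (rankOneProj (f j)) (Submodule.subset_span ⟨j, rfl⟩)
    rw [trace_mul_rankOneProj, trace_rankOneProj, trace_rankOneProj, hee, hff,
      ← inner_conj_symm (f j) (e k), Complex.mul_conj', one_mul] at h1
    have hn' : (n : ℝ) ≠ 0 := Nat.cast_ne_zero.mpr hn.ne'
    have h2 : (n : ℝ) * ‖@inner ℂ _ _ (e k) (f j)‖ ^ 2 = 1 := by exact_mod_cast h1
    have h3 : ‖@inner ℂ _ _ (e k) (f j)‖ ^ 2 = 1 / n := by
      rw [eq_div_iff hn', mul_comm]; exact h2
    rw [← Real.sqrt_sq (norm_nonneg _), h3, one_div, Real.sqrt_inv, one_div]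
end
end

section
/- If 𝒜 and ℬ are quasi-orthogonal unital *-subalgebras of M_n(ℂ), with orthonormal bases A_1,…,A_d and B_1,…,B_e (with respect to the Hilbert–Schmidt inner product), then the family √n · A_i B_j (1 ≤ i ≤ d, 1 ≤ j ≤ e) is an orthonormal system in M_n(ℂ); in particular dim(𝒜)·dim(ℬ) ≤ n². -/
open Matrix BigOperators

noncomputable section

lemma on_li {n : ℕ} {ι : Type*} [Fintype ι] [DecidableEq ι] (v : ι → Mat n)
    (hv : ∀ i i', (star (v i) * v i').trace = if i = i' then 1 else 0) :
    LinearIndependent ℂ v := by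
  rw [Fintype.linearIndependent_iff]
  intro g hg j
  have key : (star (v j) * ∑ i, g i • v i).trace = g j := by
    rw [Matrix.mul_sum, Matrix.trace_sum]
    simp only [Matrix.mul_smul, Matrix.trace_smul, hv, smul_eq_mul, mul_ite, mul_one, mul_zero]
    simp [Finset.sum_ite_eq']
  rw [hg] at key
  simpa using key.symm

/-- for quasi-orthogonal subalgebras with Hilbert–Schmidt orthonormal
bases `A_i`, `B_j`, the family `√n • A_i B_j` is orthonormal; in particular
`dim 𝒜 · dim ℬ ≤ n²`. -/
theorem stmt2 {n d e : ℕ} (𝒜 ℬ : StarSubalgebra ℂ (Mat n))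
    (h : QuasiOrth 𝒜 ℬ)
    (A : Fin d → Mat n) (B : Fin e → Mat n)
    (hA : ∀ i, A i ∈ 𝒜) (hB : ∀ j, B j ∈ ℬ)
    (hAon : ∀ i i', (star (A i) * A i').trace = if i = i' then 1 else 0)
    (hBon : ∀ j j', (star (B j) * B j').trace = if j = j' then 1 else 0)
    (hAsp : Submodule.span ℂ (Set.range A) = Subalgebra.toSubmodule 𝒜.toSubalgebra)
    (hBsp : Submodule.span ℂ (Set.range B) = Subalgebra.toSubmodule ℬ.toSubalgebra) :
    (∀ p q : Fin d × Fin e,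
      (star ((Real.sqrt n : ℂ) • (A p.1 * B p.2)) *
        ((Real.sqrt n : ℂ) • (A q.1 * B q.2))).trace = if p = q then 1 else 0) ∧
    Module.finrank ℂ 𝒜 * Module.finrank ℂ ℬ ≤ n ^ 2 := by
  have main : ∀ p q : Fin d × Fin e,
      (star ((Real.sqrt n : ℂ) • (A p.1 * B p.2)) *
        ((Real.sqrt n : ℂ) • (A q.1 * B q.2))).trace = if p = q then 1 else 0 := by
    intro p q
    have hmemA : star (A p.1) * A q.1 ∈ 𝒜 := mul_mem (star_mem (hA p.1)) (hA q.1)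
    have hmemB : B q.2 * star (B p.2) ∈ ℬ := mul_mem (hB q.2) (star_mem (hB p.2))
    have hq := h _ hmemA _ hmemB
    have hcyc : (star (A p.1 * B p.2) * (A q.1 * B q.2)).trace
        = ((star (A p.1) * A q.1) * (B q.2 * star (B p.2))).trace := by
      rw [StarMul.star_mul, mul_assoc, Matrix.trace_mul_comm]
      congr 1
      simp [mul_assoc]
    have hsm : star ((Real.sqrt n : ℂ) • (A p.1 * B p.2)) *
        ((Real.sqrt n : ℂ) • (A q.1 * B q.2))
        = (n : ℂ) • (star (A p.1 * B p.2) * (A q.1 * B q.2)) := by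
      rw [star_smul, smul_mul_assoc, Matrix.mul_smul, smul_smul]
      congr 1
      rw [RCLike.star_def, Complex.conj_ofReal, ← Complex.ofReal_mul,
        Real.mul_self_sqrt (Nat.cast_nonneg n)]
      simp
    rw [hsm, Matrix.trace_smul, smul_eq_mul, hcyc, hq, hAon,
      Matrix.trace_mul_comm, hBon]
    by_cases h1 : p.1 = q.1 <;> by_cases h2 : p.2 = q.2 <;>
      simp [h1, h2, Prod.ext_iff]
  refine ⟨main, ?_⟩
  have liA := on_li A hAon
  have liB := on_li B hBon
  have liC : LinearIndependent ℂ
      (fun p : Fin d × Fin e => (Real.sqrt n : ℂ) • (A p.1 * B p.2)) := on_li _ main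
  have hdA : Module.finrank ℂ 𝒜 = d := by
    have : Module.finrank ℂ (Subalgebra.toSubmodule 𝒜.toSubalgebra) = d := by
      rw [← hAsp, finrank_span_eq_card liA, Fintype.card_fin]
    exact this
  have hdB : Module.finrank ℂ ℬ = e := by
    have : Module.finrank ℂ (Subalgebra.toSubmodule ℬ.toSubalgebra) = e := by
      rw [← hBsp, finrank_span_eq_card liB, Fintype.card_fin]
    exact this
  have hle := liC.fintype_card_le_finrank
  rw [Fintype.card_prod, Fintype.card_fin, Fintype.card_fin] at hle
  have : Module.finrank ℂ (Mat n) = n ^ 2 := by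
    rw [Module.finrank_matrix, Fintype.card_fin, sq]
    simp
  rw [hdA, hdB, ← this]
  exact hle.trans_eq rfl
end
end

section
/- For n > 1, the number of pairwise mutually unbiased orthonormal bases of ℂ^n is at most n+1. -/
open BigOperators
noncomputable section

namespace MUBAux
variable {n : ℕ}

def u (e : EuclideanSpace ℂ (Fin n)) : EuclideanSpace ℂ (Fin n × Fin n) :=
  WithLp.toLp 2 (fun p : Fin n × Fin n => e p.1 * starRingEnd ℂ (e p.2))

def w (n : ℕ) : EuclideanSpace ℂ (Fin n × Fin n) :=
  WithLp.toLp 2 (fun p : Fin n × Fin n => if p.1 = p.2 then (1:ℂ) else 0)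

lemma inner_u_u (e f : EuclideanSpace ℂ (Fin n)) :
    (inner ℂ (u e) (u f) : ℂ) = (inner ℂ e f : ℂ) * starRingEnd ℂ (inner ℂ e f : ℂ) := by
  simp only [u, PiLp.inner_apply, RCLike.inner_apply, map_sum, map_mul, RingHomCompTriple.comp_apply,
    RingHom.id_apply, Fintype.sum_prod_type, Finset.sum_mul_sum]
  apply Finset.sum_congr rfl; intro a _
  apply Finset.sum_congr rfl; intro c _
  ring

lemma inner_w_u (e : EuclideanSpace ℂ (Fin n)) :
    (inner ℂ (w n) (u e) : ℂ) = (inner ℂ e e : ℂ) := by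
  simp [u, w, PiLp.inner_apply, Fintype.sum_prod_type, apply_ite (starRingEnd ℂ),
    Finset.sum_ite_eq, mul_comm, -inner_self_eq_norm_sq_to_K]

lemma inner_u_w (e : EuclideanSpace ℂ (Fin n)) :
    (inner ℂ (u e) (w n) : ℂ) = (inner ℂ e e : ℂ) := by
  simp [u, w, PiLp.inner_apply, Fintype.sum_prod_type, map_mul,
    Finset.sum_ite_eq, mul_comm, -inner_self_eq_norm_sq_to_K]

lemma inner_w_w : (inner ℂ (w n) (w n) : ℂ) = n := by
  simp [w, PiLp.inner_apply, Fintype.sum_prod_type, apply_ite (starRingEnd ℂ),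
    Finset.sum_ite_eq, -inner_self_eq_norm_sq_to_K]

end MUBAux

namespace MUBAux

lemma inner_Q_Q {e f : EuclideanSpace ℂ (Fin n)} (hn : (n:ℂ) ≠ 0)
    (he : (inner ℂ e e : ℂ) = 1) (hf : (inner ℂ f f : ℂ) = 1) :
    (inner ℂ (u e - (n:ℂ)⁻¹ • w n) (u f - (n:ℂ)⁻¹ • w n) : ℂ)
      = (inner ℂ e f : ℂ) * starRingEnd ℂ (inner ℂ e f : ℂ) - (n:ℂ)⁻¹ := by
  rw [inner_sub_left, inner_sub_right, inner_sub_right, inner_smul_right, inner_smul_left,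
    inner_smul_left, inner_smul_right, inner_u_u, inner_u_w, inner_w_u, inner_w_w, he, hf]
  have : starRingEnd ℂ ((n:ℂ)⁻¹) = (n:ℂ)⁻¹ := by
    simp
  rw [this]
  field_simp
  ring

lemma inner_w_Q {e : EuclideanSpace ℂ (Fin n)} (hn : (n:ℂ) ≠ 0)
    (he : (inner ℂ e e : ℂ) = 1) :
    (inner ℂ (w n) (u e - (n:ℂ)⁻¹ • w n) : ℂ) = 0 := by
  rw [inner_sub_right, inner_smul_right, inner_w_u, inner_w_w, he]
  field_simp
  ring

lemma inner_Q_w {e : EuclideanSpace ℂ (Fin n)} (hn : (n:ℂ) ≠ 0)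
    (he : (inner ℂ e e : ℂ) = 1) :
    (inner ℂ (u e - (n:ℂ)⁻¹ • w n) (w n) : ℂ) = 0 := by
  rw [inner_sub_left, inner_smul_left, inner_u_w, inner_w_w, he]
  simp
  field_simp
  ring

end MUBAux

open MUBAux

/-- for `n > 1` there are at most `n + 1` pairwise mutually unbiased
orthonormal bases of `ℂ^n`. -/
theorem stmt4 {n : ℕ} (hn : 1 < n) {ι : Type*} [Fintype ι]
    (b : ι → OrthonormalBasis (Fin n) ℂ (EuclideanSpace ℂ (Fin n)))
    (h : ∀ i j, i ≠ j → ∀ k l, ‖@inner ℂ _ _ (b i k) (b j l)‖ = 1 / Real.sqrt n) :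
    Fintype.card ι ≤ n + 1 := by
  classical
  have hn0 : (n:ℂ) ≠ 0 := Nat.cast_ne_zero.mpr (by omega)
  set N := n - 1 with hN
  -- the orthonormality facts
  have hb1 : ∀ i k, (inner ℂ (b i k) (b i k) : ℂ) = 1 := by
    intro i k
    simpa using (orthonormal_iff_ite.mp (b i).orthonormal k k)
  have hbo : ∀ i k l, (inner ℂ (b i k) (b i l) : ℂ) = if k = l then 1 else 0 :=
    fun i => orthonormal_iff_ite.mp (b i).orthonormal
  -- the family
  set Q : ι → Fin n → EuclideanSpace ℂ (Fin n × Fin n) :=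
    fun i k => u (b i k) - (n:ℂ)⁻¹ • w n with hQ
  set v : Option (ι × Fin N) → EuclideanSpace ℂ (Fin n × Fin n) :=
    fun x => x.elim (w n) (fun p => Q p.1 (Fin.castLE (Nat.sub_le n 1) p.2)) with hv
  -- Gram matrix values
  have hQQ : ∀ i k j l, (inner ℂ (Q i k) (Q j l) : ℂ)
      = if i = j then (if k = l then 1 else 0) - (n:ℂ)⁻¹ else 0 := by
    intro i k j l
    rw [hQ]
    rw [inner_Q_Q hn0 (hb1 i k) (hb1 j l)]
    by_cases hij : i = j
    · subst hij
      rw [hbo]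
      simp only [if_pos rfl]
      by_cases hkl : k = l <;> simp [hkl]
    · rw [if_neg hij]
      have hz := h i j hij k l
      have : (inner ℂ (b i k) (b j l) : ℂ) * starRingEnd ℂ (inner ℂ (b i k) (b j l) : ℂ)
          = ((‖(inner ℂ (b i k) (b j l) : ℂ)‖ ^ 2 : ℝ) : ℂ) := by
        rw [Complex.mul_conj, Complex.normSq_eq_norm_sq]
      rw [this, hz]
      have hnn : (0:ℝ) ≤ n := Nat.cast_nonneg n
      rw [div_pow, one_pow, Real.sq_sqrt hnn]
      push_cast
      field_simp
      ring
  -- linear independence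
  have hli : LinearIndependent ℂ v := by
    rw [Fintype.linearIndependent_iff]
    intro g hg
    have key : ∀ y, ∑ x, g x * (inner ℂ (v y) (v x) : ℂ) = 0 := by
      intro y
      have h2 : (inner ℂ (v y) (∑ x, g x • v x) : ℂ) = 0 := by rw [hg]; exact inner_zero_right _
      rw [inner_sum] at h2
      simp_rw [inner_smul_right] at h2
      simpa [mul_comm] using h2
    have hwQ : ∀ i k, (inner ℂ (w n) (Q i k) : ℂ) = 0 := fun i k =>
      inner_w_Q hn0 (hb1 i k)
    have hQw : ∀ i k, (inner ℂ (Q i k) (w n) : ℂ) = 0 := fun i k =>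
      inner_Q_w hn0 (hb1 i k)
    -- g none = 0
    have hgnone : g none = 0 := by
      have := key none
      rw [Fintype.sum_option] at this
      simp only [hv, Option.elim, inner_w_w, hwQ, mul_zero, Finset.sum_const_zero,
        add_zero] at this
      exact (mul_eq_zero.mp this).resolve_right hn0
    -- g (some (j,l)) = (1/n) * S j
    have hmain : ∀ (j : ι) (l : Fin N),
        g (some (j, l)) = (n:ℂ)⁻¹ * ∑ k : Fin N, g (some (j, k)) := by
      intro j l
      have hk := key (some (j, l))
      rw [Fintype.sum_option, Fintype.sum_prod_type] at hk
      simp only [hv, Option.elim, hQw, mul_zero, zero_add] at hk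
      have hcast : ∀ k l : Fin N, (Fin.castLE (Nat.sub_le n 1) k = Fin.castLE (Nat.sub_le n 1) l)
          ↔ k = l := fun k l => (Fin.castLE_inj)
      rw [show (∑ i : ι, ∑ k : Fin N, g (some (i, k)) *
            (inner ℂ (Q j (Fin.castLE (Nat.sub_le n 1) l)) (Q i (Fin.castLE (Nat.sub_le n 1) k)) : ℂ))
          = ∑ i : ι, (if j = i then ∑ k : Fin N, g (some (i, k)) *
            ((if l = k then 1 else 0) - (n:ℂ)⁻¹) else 0) from ?_] at hk
      · rw [Finset.sum_ite_eq Finset.univ j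
          (fun i => ∑ k : Fin N, g (some (i, k)) * ((if l = k then 1 else 0) - (n:ℂ)⁻¹)),
          if_pos (Finset.mem_univ j)] at hk
        have expand : ∑ k : Fin N, g (some (j, k)) * ((if l = k then 1 else 0) - (n:ℂ)⁻¹)
            = g (some (j, l)) - (n:ℂ)⁻¹ * ∑ k : Fin N, g (some (j, k)) := by
          rw [Finset.mul_sum]
          rw [show (g (some (j,l)) : ℂ) = ∑ k : Fin N, (if l = k then g (some (j,k)) else 0) by
            rw [Finset.sum_ite_eq]; simp]
          rw [← Finset.sum_sub_distrib]
          apply Finset.sum_congr rfl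
          intro k _
          by_cases hlk : l = k <;> simp [hlk] <;> ring
        rw [expand] at hk
        linear_combination hk
      · apply Finset.sum_congr rfl; intro i _
        by_cases hij : j = i
        · subst hij
          rw [if_pos rfl]
          apply Finset.sum_congr rfl; intro k _
          simp [hQQ, Fin.castLE_inj]
        · rw [if_neg hij]
          simp [hQQ, hij]
    -- conclude g = 0
    intro x
    match x with
    | none => exact hgnone
    | some (j, l) =>
      have hS : (∑ k : Fin N, g (some (j, k))) = 0 := by
        have hsum : (∑ k : Fin N, g (some (j, k)))
            = (N:ℂ) * ((n:ℂ)⁻¹ * ∑ k : Fin N, g (some (j, k))) := by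
          conv_lhs => rw [Finset.sum_congr rfl (fun k _ => hmain j k)]
          simp [Finset.sum_const, Finset.card_univ]
        have hne : (1 : ℂ) - (N:ℂ) * (n:ℂ)⁻¹ ≠ 0 := by
          intro hcon
          have : (N:ℂ) = (n:ℂ) := by
            field_simp at hcon
            linear_combination -hcon
          have : N = n := by exact_mod_cast this
          omega
        have : (∑ k : Fin N, g (some (j, k))) * ((1:ℂ) - (N:ℂ) * (n:ℂ)⁻¹) = 0 := by
          linear_combination hsum
        exact (mul_eq_zero.mp this).resolve_right hne
      rw [hmain j l, hS, mul_zero]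
  -- cardinality count
  have hcard := hli.fintype_card_le_finrank
  rw [finrank_euclideanSpace] at hcard
  simp only [Fintype.card_option, Fintype.card_prod, Fintype.card_fin, Fintype.card_prod] at hcard
  obtain ⟨m, rfl⟩ : ∃ m, n = m + 2 := ⟨n - 2, by omega⟩
  have hfac : (m + 2) * (m + 2) = (m + 2 + 1) * (m + 1) + 1 := by ring
  have hNval : N = m + 1 := by omega
  rw [hNval] at hcard
  rw [hfac] at hcard
  have : Fintype.card ι * (m + 1) ≤ (m + 2 + 1) * (m + 1) := by omega
  have := Nat.le_of_mul_le_mul_right (by linarith [this] : Fintype.card ι * (m+1) ≤ (m+2+1)*(m+1)) (by omega : 0 < m + 1)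
  omega
end
end

section
/- Let n > 2. There is no pair (𝒜, ℬ) of quasi-orthogonal unital *-subalgebras of M_{2n}(ℂ) where 𝒜 is abelian of dimension n+1 and ℬ is a subalgebra isomorphic to M_n(ℂ). -/
open Matrix BigOperators

noncomputable section

open Polynomial

lemma rank_add_le' {m n : ℕ} (A B : Matrix (Fin m) (Fin n) ℂ) : (A+B).rank ≤ A.rank + B.rank := by
  have h : LinearMap.range (A+B).mulVecLin ≤ LinearMap.range A.mulVecLin ⊔ LinearMap.range B.mulVecLin := by
    rintro x ⟨v, rfl⟩
    exact Submodule.mem_sup.2 ⟨A.mulVecLin v, ⟨v, rfl⟩, B.mulVecLin v, ⟨v, rfl⟩, by simp [Matrix.add_mulVec]⟩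
  calc (A+B).rank ≤ Module.finrank ℂ (LinearMap.range A.mulVecLin ⊔ LinearMap.range B.mulVecLin : Submodule ℂ _) := Submodule.finrank_mono h
    _ ≤ _ := by
        have := Submodule.finrank_sup_add_finrank_inf_eq (LinearMap.range A.mulVecLin) (LinearMap.range B.mulVecLin)
        unfold Matrix.rank; omega

lemma rank_sum_le {m n : ℕ} {ι : Type*} (T : Finset ι) (f : ι → Matrix (Fin m) (Fin n) ℂ) :
    (∑ i ∈ T, f i).rank ≤ ∑ i ∈ T, (f i).rank := by
  classical
  induction T using Finset.induction_on with
  | empty => simp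
  | insert _ _ h ih =>
      rw [Finset.sum_insert h, Finset.sum_insert h]
      exact le_trans (rank_add_le' _ _) (by omega)

/-- Spectral decomposition of a Hermitian idempotent into `trace` many rank-one pieces. -/
lemma herm_idem_decomp {m : ℕ} {Q : Mat m} (hQ : Q.IsHermitian) (h2 : Q * Q = Q) :
    ∃ (T : Finset (Fin m)) (v : Fin m → (Fin m → ℂ)),
      Q = ∑ i ∈ T, vecMulVec (v i) (star (v i)) ∧ Q.trace = T.card := by
  classical
  set U : Mat m := (hQ.eigenvectorUnitary : Mat m) with hU
  set μ := hQ.eigenvalues with hμ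
  have hUU : star U * U = 1 := hQ.eigenvectorUnitary.2.1
  have hUU' : U * star U = 1 := hQ.eigenvectorUnitary.2.2
  have hspec : Q = U * diagonal (fun i => (μ i : ℂ)) * star U := by
    have := hQ.spectral_theorem
    exact this
  have hD : star U * Q * U = diagonal (fun i => (μ i : ℂ)) := by
    rw [hspec]
    calc star U * (U * diagonal (fun i => (μ i : ℂ)) * star U) * U
        = (star U * U) * diagonal (fun i => (μ i : ℂ)) * (star U * U) := by
          simp only [mul_assoc]
      _ = diagonal (fun i => (μ i : ℂ)) := by rw [hUU]; simp
  have hDidem : ∀ i, μ i = 0 ∨ μ i = 1 := by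
    intro i
    have key : (star U * Q * U) * (star U * Q * U) = star U * Q * U := by
      calc (star U * Q * U) * (star U * Q * U)
          = star U * Q * ((U * star U) * (Q * U)) := by simp only [mul_assoc]
        _ = star U * Q * (Q * U) := by rw [hUU', one_mul]
        _ = star U * (Q * Q) * U := by simp only [mul_assoc]
        _ = star U * Q * U := by rw [h2]
    rw [hD, diagonal_mul_diagonal] at key
    have := congrFun (Matrix.diagonal_injective key) i
    have : (μ i : ℂ) * (μ i : ℂ) = (μ i : ℂ) := this
    have h0 : (μ i : ℂ) * ((μ i : ℂ) - 1) = 0 := by ring_nf; linear_combination this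
    rcases mul_eq_zero.mp h0 with h | h
    · left; exact_mod_cast h
    · right; have := sub_eq_zero.mp h; exact_mod_cast this
  set T : Finset (Fin m) := Finset.univ.filter (fun i => μ i = 1) with hT
  refine ⟨T, fun i a => U a i, ?_, ?_⟩
  · funext a b
    have hentry : Q a b = ∑ i, U a i * (μ i : ℂ) * star (U b i) := by
      rw [hspec]
      rw [Matrix.mul_apply]
      congr 1; funext i
      rw [Matrix.mul_diagonal]  -- hope: (M * diagonal d) a i = M a i * d i
      rw [Matrix.star_apply]
    rw [hentry, Matrix.sum_apply]
    rw [← Finset.sum_filter_add_sum_filter_not Finset.univ (fun i => μ i = 1)]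
    have h2' : ∑ i ∈ Finset.univ.filter (fun i => ¬ μ i = 1), U a i * (μ i : ℂ) * star (U b i) = 0 := by
      apply Finset.sum_eq_zero
      intro i hi
      simp only [Finset.mem_filter] at hi
      rcases hDidem i with h | h
      · rw [h]; simp
      · exact absurd h hi.2
    rw [h2', add_zero]
    apply Finset.sum_congr rfl
    intro i hi
    simp only [Finset.mem_filter] at hi
    rw [hi.2]
    simp [Matrix.vecMulVec_apply, Pi.star_apply, mul_comm]
  · have : Q.trace = (diagonal (fun i => (μ i : ℂ))).trace := by
      rw [hspec, Matrix.trace_mul_comm, ← mul_assoc, hUU, one_mul]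
    rw [this, trace_diagonal]
    rw [← Finset.sum_filter_add_sum_filter_not Finset.univ (fun i => μ i = 1)]
    have h2' : ∑ i ∈ Finset.univ.filter (fun i => ¬ μ i = 1), (μ i : ℂ) = 0 := by
      apply Finset.sum_eq_zero
      intro i hi
      simp only [Finset.mem_filter] at hi
      rcases hDidem i with h | h
      · rw [h]; simp
      · exact absurd h hi.2
    rw [h2', add_zero]
    have heq : ∑ i ∈ Finset.univ.filter (fun i => μ i = 1), (μ i : ℂ)
        = ∑ _i ∈ Finset.univ.filter (fun i => μ i = 1), (1 : ℂ) := by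
      apply Finset.sum_congr rfl
      intro i hi
      simp only [Finset.mem_filter] at hi
      simp [hi.2]
    rw [heq, Finset.sum_const, hT]
    simp

/-- Conjugation by an invertible pair as an ℝ-algebra homomorphism. -/
def conjAlgHom {m : ℕ} (U V : Mat m) (hVU : V * U = 1) (hUV : U * V = 1) :
    Mat m →ₐ[ℝ] Mat m where
  toFun X := U * X * V
  map_one' := by show U * 1 * V = 1; rw [mul_one, hUV]
  map_mul' X Y := by
    show U * (X * Y) * V = (U * X * V) * (U * Y * V)
    calc U * (X * Y) * V = U * (X * ((V * U) * Y)) * V := by rw [hVU, one_mul]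
      _ = (U * X * V) * (U * Y * V) := by simp only [mul_assoc]
  map_zero' := by show U * 0 * V = 0; simp
  map_add' X Y := by show U * (X + Y) * V = U * X * V + U * Y * V; rw [mul_add, add_mul]
  commutes' r := by
    show U * (algebraMap ℝ (Mat m) r) * V = algebraMap ℝ (Mat m) r
    rw [Algebra.algebraMap_eq_smul_one, mul_smul_comm, smul_mul_assoc, mul_one, hUV]

lemma real_smul_mat {m : ℕ} (a : ℝ) (X : Mat m) : a • X = (a : ℂ) • X := by
  ext i j
  simp [Complex.real_smul]

/-- In a commutative star-closed subalgebra with unit `p`, a Hermitian element which is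
not a multiple of `p` yields a nontrivial Hermitian idempotent. -/
lemma exists_sub_projection {m : ℕ} (S : Submodule ℂ (Mat m))
    (hmul : ∀ x ∈ S, ∀ y ∈ S, x * y ∈ S)
    {p : Mat m} (hp_unit : ∀ x ∈ S, p * x = x)
    {A : Mat m} (hAS : A ∈ S) (hA : A.IsHermitian) (hA_notin : A ∉ Submodule.span ℂ {p})
    (hAp : A * p = A) :
    ∃ q : Mat m, q ∈ S ∧ q.IsHermitian ∧ q * q = q ∧ q ≠ 0 ∧ q ≠ p := by
  classical
  set U : Mat m := (hA.eigenvectorUnitary : Mat m) with hU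
  set μ := hA.eigenvalues with hμ
  have hUU : star U * U = 1 := hA.eigenvectorUnitary.2.1
  have hUU' : U * star U = 1 := hA.eigenvectorUnitary.2.2
  have hspec : A = U * diagonal (fun i => (μ i : ℂ)) * star U := by
    have := hA.spectral_theorem
    exact this
  -- a nonzero eigenvalue exists
  have hA0 : A ≠ 0 := fun h => hA_notin (h ▸ Submodule.zero_mem _)
  have : ∃ i₀, μ i₀ ≠ 0 := by
    by_contra h
    push_neg at h
    apply hA0
    rw [hspec]
    have : (fun i => ((μ i : ℂ))) = fun _ => (0 : ℂ) := by
      funext i; rw [h i]; simp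
    rw [this]
    simp [Matrix.diagonal_zero]
  obtain ⟨i₀, hi₀⟩ := this
  set lam := μ i₀ with hlam
  -- the interpolation polynomial
  set s : Finset ℝ := insert 0 (Finset.image μ Finset.univ) with hs
  set r : ℝ → ℝ := fun t => if t = lam then 1 else 0 with hr
  set g : ℝ[X] := Lagrange.interpolate s id r with hg
  have heval : ∀ t ∈ s, eval t g = r t := by
    intro t ht
    exact Lagrange.eval_interpolate_at_node r (Set.injOn_id _) ht
  have heval0 : eval 0 g = 0 := by
    rw [heval 0 (Finset.mem_insert_self _ _), hr]
    simp [hi₀.symm, Ne.symm hi₀]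
  have hevalμ : ∀ i, eval (μ i) g = if μ i = lam then 1 else 0 := by
    intro i
    rw [heval (μ i) (Finset.mem_insert_of_mem (Finset.mem_image_of_mem μ (Finset.mem_univ i)))]
  -- q in spectral form
  set D : Mat m := diagonal (fun i => if μ i = lam then (1:ℂ) else 0) with hD
  set q : Mat m := U * D * star U with hq
  -- q = aeval A g
  have key : aeval A g = q := by
    have h1 : aeval A g = U * (aeval (diagonal (fun i => (μ i : ℂ))) g) * star U := by
      rw [hspec]
      exact aeval_algHom_apply (conjAlgHom U (star U) hUU hUU') _ g
    have h2 : aeval (diagonal (fun i => (μ i : ℂ))) g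
        = diagonal (fun i => (aeval ((μ i : ℂ)) g)) := by
      have h3 := aeval_algHom_apply (Matrix.diagonalAlgHom (n := Fin m) ℝ (α := ℂ))
        (fun i => (μ i : ℂ)) g
      have h5 : (diagonal (fun i => (μ i : ℂ)) : Mat m)
          = Matrix.diagonalAlgHom (n := Fin m) ℝ (α := ℂ) (fun i => (μ i : ℂ)) := rfl
      rw [h5, h3]
      exact congrArg diagonal (funext fun i =>
        (aeval_algHom_apply (Pi.evalAlgHom ℝ (fun _ => ℂ) i) (fun i => (μ i : ℂ)) g).symm)
    have h4 : ∀ i : Fin m, aeval ((μ i : ℂ)) g = if μ i = lam then (1:ℂ) else 0 := by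
      intro i
      have : ((μ i : ℂ)) = algebraMap ℝ ℂ (μ i) := rfl
      rw [this, aeval_algebraMap_apply]
      have : aeval (μ i) g = eval (μ i) g := congrFun (coe_aeval_eq_eval (μ i)) g
      rw [this, hevalμ i]
      split <;> simp
    rw [h1, h2]
    have h6 : (fun i => (aeval ((μ i : ℂ)) g)) = (fun i => if μ i = lam then (1:ℂ) else 0) :=
      funext h4
    rw [h6]
  -- membership of q in S
  have hXdvd : X ∣ g := X_dvd_iff.mpr (by rw [coeff_zero_eq_eval_zero]; exact heval0)
  obtain ⟨h, hgh⟩ := hXdvd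
  have hpow : ∀ k : ℕ, A ^ (k+1) ∈ S := by
    intro k
    induction k with
    | zero => simpa [pow_one] using hAS
    | succ k ih => rw [pow_succ]; exact hmul _ ih _ hAS
  have hmain : ∀ h : ℝ[X], A * (aeval A h) ∈ S := by
    intro h
    induction h using Polynomial.induction_on' with
    | add f g hf hg => rw [map_add, mul_add]; exact S.add_mem hf hg
    | monomial k a =>
        rw [aeval_monomial]
        have heq : A * (algebraMap ℝ (Mat m) a * A ^ k) = a • A ^ (k+1) := by
          rw [Algebra.algebraMap_eq_smul_one, smul_mul_assoc, one_mul, mul_smul_comm, pow_succ']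
        rw [heq, real_smul_mat]
        exact S.smul_mem _ (hpow k)
  have hqS : q ∈ S := by
    rw [← key, hgh, _root_.map_mul, aeval_X]
    exact hmain h
  -- Hermitian
  have hDstar : Dᴴ = D := by
    rw [hD, diagonal_conjTranspose]
    have hfun : (star fun i => if μ i = lam then (1:ℂ) else 0)
        = fun i => if μ i = lam then (1:ℂ) else 0 := by
      funext i
      by_cases hc : μ i = lam <;> simp [hc]
    rw [hfun]
  have hqH : q.IsHermitian := by
    show qᴴ = q
    calc qᴴ = (star U)ᴴ * (Dᴴ * Uᴴ) := by rw [hq, conjTranspose_mul, conjTranspose_mul]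
      _ = U * (D * star U) := by
          rw [hDstar]
          congr 1
          simp [Matrix.star_eq_conjTranspose]
      _ = q := by rw [hq, mul_assoc]
  -- idempotent
  have hDD : D * D = D := by
    rw [hD, diagonal_mul_diagonal]
    have hfun : (fun i => (if μ i = lam then (1:ℂ) else 0) * (if μ i = lam then (1:ℂ) else 0))
        = fun i => if μ i = lam then (1:ℂ) else 0 := by
      funext i
      by_cases hc : μ i = lam <;> simp [hc]
    rw [hfun]
  have hqidem : q * q = q := by
    calc q * q = U * D * ((star U * U) * (D * star U)) := by rw [hq]; simp only [mul_assoc]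
      _ = U * D * (D * star U) := by rw [hUU, one_mul]
      _ = U * (D * D) * star U := by simp only [mul_assoc]
      _ = q := by rw [hDD, hq]
  -- recover D from q
  have hDq : star U * q * U = D := by
    calc star U * q * U = (star U * U) * D * (star U * U) := by rw [hq]; simp only [mul_assoc]
      _ = D := by rw [hUU]; simp
  -- q ≠ 0
  have hq0 : q ≠ 0 := by
    intro hcon
    have : D = 0 := by rw [← hDq, hcon]; simp
    have := congrFun (congrFun this i₀) i₀
    rw [hD] at this
    simp [Matrix.diagonal_apply_eq] at this
    exact this hlam.symm
  -- q ≠ p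
  have hqp : q ≠ p := by
    intro hcon
    apply hA_notin
    have hAq : A * q = (lam : ℂ) • q := by
      have h7 : A * q = U * (diagonal (fun i => (μ i : ℂ)) * D) * star U := by
        calc A * q = U * diagonal (fun i => (μ i : ℂ)) * ((star U * U) * (D * star U)) := by
              rw [hspec, hq]; simp only [mul_assoc]
          _ = U * diagonal (fun i => (μ i : ℂ)) * (D * star U) := by rw [hUU, one_mul]
          _ = U * (diagonal (fun i => (μ i : ℂ)) * D) * star U := by simp only [mul_assoc]
      have h8 : diagonal (fun i => (μ i : ℂ)) * D = (lam : ℂ) • D := by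
        rw [hD, diagonal_mul_diagonal]
        ext i j
        simp only [Matrix.diagonal_apply, Matrix.smul_apply, smul_eq_mul]
        by_cases hij : i = j
        · subst hij
          simp only [if_pos rfl]
          by_cases hc : μ i = lam <;> simp [hc]
        · simp [hij]
      rw [h7, h8, hq]
      simp [Matrix.smul_mul, Matrix.mul_smul]
    have hAq' : A = (lam : ℂ) • p := by
      rw [← hcon, ← hAq, hcon, hAp]
    rw [hAq']
    exact Submodule.smul_mem _ _ (Submodule.mem_span_singleton_self p)
  exact ⟨q, hqS, hqH, hqidem, hq0, hqp⟩

lemma corner_family (d : ℕ) : ∀ {m : ℕ} (S : Submodule ℂ (Mat m))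
    (_ : ∀ x ∈ S, ∀ y ∈ S, x * y ∈ S)
    (_ : ∀ x ∈ S, star x ∈ S)
    (_ : ∀ x ∈ S, ∀ y ∈ S, x * y = y * x)
    (p : Mat m) (_ : p ∈ S) (_ : p.IsHermitian) (_ : p * p = p) (_ : p ≠ 0)
    (_ : ∀ x ∈ S, p * x = x) (_ : Module.finrank ℂ S = d),
    ∃ f : Fin d → Mat m,
      (∀ i, f i ∈ S ∧ (f i).IsHermitian ∧ f i * f i = f i ∧ f i ≠ 0) ∧
      (∀ i j, i ≠ j → f i * f j = 0) := by
  induction d using Nat.strong_induction_on with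
  | _ d ih =>
    intro m S hmul hstar hcomm p hpS hpH hp2 hp0 hp_unit hrank
    have hfin : FiniteDimensional ℂ S := inferInstance
    have hd1 : 1 ≤ d := by
      rw [← hrank]
      have : S ≠ ⊥ := by
        intro hbot
        exact hp0 (by simpa [hbot] using hpS)
      have := (Submodule.finrank_eq_zero (S := S)).not.mpr this
      omega
    by_cases hEx : ∃ x ∈ S, x ∉ Submodule.span ℂ {p}
    · -- find Hermitian A ∈ S not in span {p}
      obtain ⟨x, hxS, hx⟩ := hEx
      have hHerm : ∃ A, A ∈ S ∧ A.IsHermitian ∧ A ∉ Submodule.span ℂ {p} := by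
        by_cases h1 : (x + star x) ∈ Submodule.span ℂ {p}
        · by_cases h2 : (Complex.I • (x - star x)) ∈ Submodule.span ℂ {p}
          · exfalso
            apply hx
            have : x = (2⁻¹ : ℂ) • ((x + star x) - Complex.I • (Complex.I • (x - star x))) := by
              rw [smul_smul, Complex.I_mul_I]
              module
            rw [this]
            exact Submodule.smul_mem _ _ (Submodule.sub_mem _ h1 (Submodule.smul_mem _ _ h2))
          · refine ⟨Complex.I • (x - star x), ?_, ?_, h2⟩
            · exact Submodule.smul_mem _ _ (Submodule.sub_mem _ hxS (hstar x hxS))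
            · have hst : star (Complex.I • (x - star x)) = Complex.I • (x - star x) := by
                rw [star_smul, star_sub, star_star, Complex.star_def, Complex.conj_I]
                rw [neg_smul, ← smul_neg, neg_sub]
              exact hst
        · refine ⟨x + star x, Submodule.add_mem _ hxS (hstar x hxS), ?_, h1⟩
          show (x + star x)ᴴ = _
          rw [conjTranspose_add, ← Matrix.star_eq_conjTranspose, ← Matrix.star_eq_conjTranspose,
            star_star]
          exact add_comm _ _
      obtain ⟨A, hAS, hAH, hAnot⟩ := hHerm
      have hAp : A * p = A := by rw [hcomm A hAS p hpS]; exact hp_unit A hAS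
      obtain ⟨q, hqS, hqH, hq2, hq0, hqp⟩ :=
        exists_sub_projection S hmul hp_unit hAS hAH hAnot hAp
      -- corner algebras
      have hqp_eq : q * p = q := by rw [hcomm q hqS p hpS]; exact hp_unit q hqS
      have hpq_eq : p * q = q := hp_unit q hqS
      set p' := p - q with hp'
      have hp'S : p' ∈ S := Submodule.sub_mem _ hpS hqS
      have hp'H : p'.IsHermitian := hpH.sub hqH
      have hp'2 : p' * p' = p' := by
        rw [hp']
        rw [sub_mul, mul_sub, mul_sub, hp2, hpq_eq, hqp_eq, hq2]
        abel
      have hp'0 : p' ≠ 0 := by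
        intro hcon
        rw [hp', sub_eq_zero] at hcon
        exact hqp hcon.symm
      have hqp' : q * p' = 0 := by rw [hp', mul_sub, hqp_eq, hq2, sub_self]
      have hp'q : p' * q = 0 := by rw [hp', sub_mul, hpq_eq, hq2, sub_self]
      -- the two corners
      set S₁ := Submodule.map (LinearMap.mulLeft ℂ q) S with hS₁
      set S₂ := Submodule.map (LinearMap.mulLeft ℂ p') S with hS₂
      have hS₁le : S₁ ≤ S := by
        rintro z ⟨x, hx, rfl⟩
        exact hmul q hqS x hx
      have hS₂le : S₂ ≤ S := by
        rintro z ⟨x, hx, rfl⟩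
        exact hmul p' hp'S x hx
      -- generic corner facts
      have corner_mul : ∀ (r : Mat m), r ∈ S → r * r = r →
          ∀ x ∈ Submodule.map (LinearMap.mulLeft ℂ r) S, ∀ y ∈ Submodule.map (LinearMap.mulLeft ℂ r) S,
            x * y ∈ Submodule.map (LinearMap.mulLeft ℂ r) S := by
        rintro r hrS hr2 _ ⟨x, hx, rfl⟩ _ ⟨y, hy, rfl⟩
        refine ⟨x * (r * y), hmul x hx _ (hmul r hrS y hy), ?_⟩
        show r * (x * (r * y)) = (r * x) * (r * y)
        simp only [mul_assoc]
      have corner_star : ∀ (r : Mat m), r ∈ S → r.IsHermitian →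
          ∀ x ∈ Submodule.map (LinearMap.mulLeft ℂ r) S,
            star x ∈ Submodule.map (LinearMap.mulLeft ℂ r) S := by
        rintro r hrS hrH _ ⟨x, hx, rfl⟩
        refine ⟨star x, hstar x hx, ?_⟩
        show r * star x = star (r * x)
        rw [StarMul.star_mul]
        have hr : star r = r := hrH
        rw [hr]
        exact hcomm r hrS (star x) (hstar x hx)
      have corner_unit : ∀ (r : Mat m), r * r = r →
          ∀ x ∈ Submodule.map (LinearMap.mulLeft ℂ r) S, r * x = x := by
        rintro r hr2 _ ⟨x, hx, rfl⟩
        show r * (r * x) = r * x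
        rw [← mul_assoc, hr2]
      have corner_self : ∀ (r : Mat m), r ∈ S → (∀ x ∈ S, r * x = r) →
          r ∈ Submodule.map (LinearMap.mulLeft ℂ r) S := by
        intro r hrS hr
        exact ⟨p, hpS, hr p hpS⟩
      -- dimension count
      have hsup : S₁ ⊔ S₂ = S := by
        apply le_antisymm
        · exact sup_le hS₁le hS₂le
        · intro x hx
          apply Submodule.mem_sup.2
          refine ⟨q * x, ⟨x, hx, rfl⟩, p' * x, ⟨x, hx, rfl⟩, ?_⟩
          rw [hp', sub_mul, ← add_sub_assoc]
          rw [hp_unit x hx]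
          abel
      have hinf : S₁ ⊓ S₂ = ⊥ := by
        apply eq_bot_iff.2
        rintro z ⟨⟨x, hx, rfl⟩, ⟨y, hy, hzy⟩⟩
        simp only [LinearMap.mulLeft_apply] at hzy ⊢
        have h1 : q * (q * x) = q * x := by rw [← mul_assoc, hq2]
        have h2 : q * (p' * y) = 0 := by rw [← mul_assoc, hqp', zero_mul]
        rw [hzy] at h2
        rw [Submodule.mem_bot, ← h1, h2]
      have hd12 : Module.finrank ℂ S₁ + Module.finrank ℂ S₂ = d := by
        have h := Submodule.finrank_sup_add_finrank_inf_eq S₁ S₂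
        rw [hsup, hinf, hrank] at h
        simp only [finrank_bot] at h
        omega
      have hq_in : q ∈ S₁ := ⟨p, hpS, by
        show q * p = q
        exact hqp_eq⟩
      have hp'_in : p' ∈ S₂ := ⟨p, hpS, by
        show p' * p = p'
        rw [hcomm p' hp'S p hpS]
        exact hp_unit p' hp'S⟩
      have hd1pos : 1 ≤ Module.finrank ℂ S₁ := by
        by_contra hcon
        have h0 : Module.finrank ℂ S₁ = 0 := by omega
        have hb : S₁ = ⊥ := (Submodule.finrank_eq_zero (S := S₁)).mp h0
        rw [hb] at hq_in
        exact hq0 (by simpa using hq_in)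
      have hd2pos : 1 ≤ Module.finrank ℂ S₂ := by
        by_contra hcon
        have h0 : Module.finrank ℂ S₂ = 0 := by omega
        have hb : S₂ = ⊥ := (Submodule.finrank_eq_zero (S := S₂)).mp h0
        rw [hb] at hp'_in
        exact hp'0 (by simpa using hp'_in)
      set d₁ := Module.finrank ℂ S₁ with hd₁
      set d₂ := Module.finrank ℂ S₂ with hd₂
      obtain ⟨f₁, hf₁, horth₁⟩ := ih d₁ (by omega) S₁
        (corner_mul q hqS hq2) (corner_star q hqS hqH)
        (fun x hx y hy => hcomm x (hS₁le hx) y (hS₁le hy))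
        q hq_in hqH hq2 hq0 (corner_unit q hq2) rfl
      obtain ⟨f₂, hf₂, horth₂⟩ := ih d₂ (by omega) S₂
        (corner_mul p' hp'S hp'2) (corner_star p' hp'S hp'H)
        (fun x hx y hy => hcomm x (hS₂le hx) y (hS₂le hy))
        p' hp'_in hp'H hp'2 hp'0 (corner_unit p' hp'2) rfl
      set c : Fin d ≃ (Fin d₁ ⊕ Fin d₂) := (finCongr hd12.symm).trans finSumFinEquiv.symm with hc
      -- corner units
      have hu1 : ∀ a, q * f₁ a = f₁ a := fun a => corner_unit q hq2 (f₁ a) (hf₁ a).1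
      have hu2 : ∀ b, p' * f₂ b = f₂ b := fun b => corner_unit p' hp'2 (f₂ b) (hf₂ b).1
      have hcross : ∀ a b, f₁ a * f₂ b = 0 := by
        intro a b
        have hfa : f₁ a ∈ S := hS₁le (hf₁ a).1
        have hfb : f₂ b ∈ S := hS₂le (hf₂ b).1
        calc f₁ a * f₂ b = (q * f₁ a) * (p' * f₂ b) := by rw [hu1, hu2]
          _ = q * (f₁ a * p') * f₂ b := by simp only [mul_assoc]
          _ = q * (p' * f₁ a) * f₂ b := by rw [hcomm (f₁ a) hfa p' hp'S]
          _ = (q * p') * (f₁ a * f₂ b) := by simp only [mul_assoc]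
          _ = 0 := by rw [hqp', zero_mul]
      have hcross' : ∀ a b, f₂ b * f₁ a = 0 := by
        intro a b
        rw [hcomm (f₂ b) (hS₂le (hf₂ b).1) (f₁ a) (hS₁le (hf₁ a).1)]
        exact hcross a b
      refine ⟨fun i => Sum.elim f₁ f₂ (c i), ?_, ?_⟩
      · intro i
        rcases hci : c i with a | b
        · simp only [hci, Sum.elim_inl]
          exact ⟨hS₁le (hf₁ a).1, (hf₁ a).2.1, (hf₁ a).2.2.1, (hf₁ a).2.2.2⟩
        · simp only [hci, Sum.elim_inr]
          exact ⟨hS₂le (hf₂ b).1, (hf₂ b).2.1, (hf₂ b).2.2.1, (hf₂ b).2.2.2⟩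
      · intro i j hij
        have hcij : c i ≠ c j := fun h => hij (c.injective h)
        rcases hci : c i with a | b <;> rcases hcj : c j with a' | b' <;>
          simp only [hci, hcj, Sum.elim_inl, Sum.elim_inr]
        · exact horth₁ a a' (by rintro rfl; exact hcij (hci.trans hcj.symm))
        · exact hcross a b'
        · exact hcross' a' b
        · exact horth₂ b b' (by rintro rfl; exact hcij (hci.trans hcj.symm))
    · -- S ⊆ span {p}, so d = 1
      push_neg at hEx
      have hle : S ≤ Submodule.span ℂ {p} := hEx
      have : Module.finrank ℂ S ≤ 1 := by
        have h1 : Module.finrank ℂ (Submodule.span ℂ ({p} : Set (Mat m))) = 1 :=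
          finrank_span_singleton hp0
      
        calc Module.finrank ℂ S ≤ Module.finrank ℂ (Submodule.span ℂ ({p} : Set (Mat m))) :=
              Submodule.finrank_mono hle
          _ = 1 := h1
      have hd : d = 1 := by omega
      subst hd
      refine ⟨fun _ => p, fun _ => ⟨hpS, hpH, hp2, hp0⟩, fun i j hij => ?_⟩
      exact absurd (Subsingleton.elim i j) hij

lemma rank_vecMulVec_le {m n : ℕ} (x : Fin m → ℂ) (y : Fin n → ℂ) :
    (vecMulVec x y).rank ≤ 1 := by
  rw [Matrix.vecMulVec_eq Unit]
  refine le_trans (Matrix.rank_mul_le_left _ _) (le_trans (Matrix.rank_le_card_width _) ?_)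
  simp

lemma rank_le_trace_idem {N : ℕ} {E : Mat N} (hH : E.IsHermitian) (h2 : E * E = E) :
    ∃ t : ℕ, E.trace = t ∧ E.rank ≤ t := by
  obtain ⟨T, v, hdec, htr⟩ := herm_idem_decomp hH h2
  refine ⟨T.card, htr, ?_⟩
  rw [hdec]
  refine le_trans (rank_sum_le _ _) ?_
  calc ∑ i ∈ T, (vecMulVec (v i) (star (v i))).rank ≤ ∑ _i ∈ T, 1 :=
        Finset.sum_le_sum (fun i _ => _root_.rank_vecMulVec_le _ _)
    _ = T.card := by simp

lemma trace_vecMulVec_mul {N : ℕ} (x : Fin N → ℂ) (E : Mat N) :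
    (vecMulVec x (star x) * E).trace = star x ⬝ᵥ (E *ᵥ x) := by
  simp only [Matrix.trace, Matrix.diag_apply, Matrix.mul_apply, Matrix.vecMulVec_apply,
    Pi.star_apply, dotProduct, Matrix.mulVec, Finset.mul_sum]
  rw [Finset.sum_comm]
  apply Finset.sum_congr rfl
  intro b _
  apply Finset.sum_congr rfl
  intro a _
  ring

/-- The key bound: a nonzero Hermitian idempotent quasi-orthogonal to a system of
matrix units with `trace e₀₀ = 2` has `2·trace ≥ n`. -/
lemma key_bound {N n : ℕ} (hn : 0 < n) (hN : 0 < N) (e : Fin n → Fin n → Mat N)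
    (hemul : ∀ j k l, e j k * e k l = e j l)
    (hestar : ∀ j k, star (e j k) = e k j)
    (htr : ∀ j k, (e j k).trace = if j = k then 2 else 0)
    {P : Mat N} (hPH : P.IsHermitian) (hP2 : P * P = P) (hP0 : P ≠ 0)
    (hQO : ∀ j k, (N : ℂ) * (P * e j k).trace = P.trace * (e j k).trace) :
    ∃ t : ℕ, P.trace = t ∧ n ≤ 2 * t := by
  haveI : NeZero n := ⟨by omega⟩
  -- rank of e 0 0 is at most 2
  have h00H : (e 0 0).IsHermitian := by
    have := hestar 0 0
    rwa [Matrix.star_eq_conjTranspose] at this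
  have h002 : e 0 0 * e 0 0 = e 0 0 := hemul 0 0 0
  obtain ⟨s, hs, hrank00⟩ := rank_le_trace_idem h00H h002
  have hs2 : s = 2 := by
    have := (htr 0 0).symm.trans hs
    simp at this
    exact_mod_cast this.symm
  rw [hs2] at hrank00
  -- decompose P
  obtain ⟨T, v, hdec, htrP⟩ := herm_idem_decomp hPH hP2
  set t := T.card with ht
  refine ⟨t, htrP, ?_⟩
  have ht1 : 1 ≤ t := by
    rcases Nat.eq_zero_or_pos t with h0 | h1
    · exfalso
      apply hP0
      have hTe : T = ∅ := Finset.card_eq_zero.mp (by omega)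
      rw [hdec, hTe, Finset.sum_empty]
    · exact h1
  -- the matrix N(P) and its scalar form
  set Nm : Mat n := Matrix.of (fun j k => (N : ℂ) * (P * e j k).trace) with hNm
  have hNm_scalar : Nm = ((2 * t : ℕ) : ℂ) • (1 : Mat n) := by
    funext j k
    show (N : ℂ) * (P * e j k).trace = _
    rw [hQO j k, htr j k, htrP]
    by_cases hjk : j = k
    · subst hjk
      simp [Matrix.one_apply, Matrix.smul_apply]
      push_cast
      ring
    · simp [Matrix.one_apply, hjk, Matrix.smul_apply]
  -- per-term matrices
  have hterm : ∀ i : Fin N, ((N:ℂ) • Matrix.of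
      (fun j k => ((vecMulVec (v i) (star (v i))) * e j k).trace) : Mat n).rank ≤ 2 := by
    intro i
    set x := v i with hx
    set W1 : Matrix (Fin n) (Fin N) ℂ := Matrix.of (fun j c => star ((e 0 j *ᵥ x) c)) with hW1
    set W2 : Matrix (Fin N) (Fin n) ℂ := Matrix.of (fun c k => (e 0 k *ᵥ x) c) with hW2
    have hGW : Matrix.of (fun j k => ((vecMulVec x (star x)) * e j k).trace) = W1 * W2 := by
      funext j k
      show ((vecMulVec x (star x)) * e j k).trace = _
      rw [trace_vecMulVec_mul]
      have h1 : e j k *ᵥ x = e j 0 *ᵥ (e 0 k *ᵥ x) := by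
        rw [Matrix.mulVec_mulVec, hemul]
      rw [h1]
      have h2 : e j 0 = (e 0 j)ᴴ := by
        rw [← Matrix.star_eq_conjTranspose, hestar]
      rw [h2]
      rw [Matrix.dotProduct_mulVec, ← Matrix.star_mulVec]
      show star (e 0 j *ᵥ x) ⬝ᵥ (e 0 k *ᵥ x) = (W1 * W2) j k
      rw [Matrix.mul_apply]
      simp only [hW1, hW2, Matrix.of_apply, dotProduct, Pi.star_apply]
    have hW2fix : W2 = e 0 0 * W2 := by
      funext c k
      show W2 c k = _
      rw [Matrix.mul_apply]
      have : (e 0 0 *ᵥ (fun d => W2 d k)) c = ∑ d, e 0 0 c d * W2 d k := by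
        simp [Matrix.mulVec, dotProduct]
      rw [← this]
      have hfun : (fun d => W2 d k) = e 0 k *ᵥ x := rfl
      rw [hfun, Matrix.mulVec_mulVec, hemul]
      rfl
    have hsmul : ((N:ℂ) • (W1 * W2) : Mat n) = (((N:ℂ) • W1) * W2 : _) := by
      rw [Matrix.smul_mul]
    rw [hGW, hsmul]
    refine le_trans (Matrix.rank_mul_le_right _ _) ?_
    rw [hW2fix]
    exact le_trans (Matrix.rank_mul_le_left _ _) hrank00
  -- sum up
  have hNsum : Nm = ∑ i ∈ T, ((N:ℂ) • Matrix.of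
      (fun j k => ((vecMulVec (v i) (star (v i))) * e j k).trace) : Mat n) := by
    funext j k
    show (N : ℂ) * (P * e j k).trace = _
    rw [hdec, Finset.sum_mul]
    rw [Matrix.trace_sum]
    rw [Matrix.sum_apply]
    rw [Finset.mul_sum]
    apply Finset.sum_congr rfl
    intro i _
    simp [Matrix.smul_apply, smul_eq_mul]
  have hrankNm : Nm.rank ≤ 2 * t := by
    rw [hNsum]
    refine le_trans (rank_sum_le _ _) ?_
    calc ∑ i ∈ T, ((N:ℂ) • Matrix.of
          (fun j k => ((vecMulVec (v i) (star (v i))) * e j k).trace) : Mat n).rank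
        ≤ ∑ _i ∈ T, 2 := Finset.sum_le_sum (fun i _ => hterm i)
      _ = 2 * t := by rw [Finset.sum_const, ht]; ring
  -- but Nm has full rank
  have hc0 : ((2 * t : ℕ) : ℂ) ≠ 0 := by
    simp
    omega
  have hfull : Nm.rank = n := by
    rw [hNm_scalar]
    set c : ℂ := ((2 * t : ℕ) : ℂ) with hc
    have hinv : (c⁻¹ • (1 : Mat n)) * (c • (1 : Mat n)) = 1 := by
      rw [Matrix.smul_mul, Matrix.mul_smul, smul_smul, one_mul, inv_mul_cancel₀ hc0, one_smul]
    have h1 : (1 : Mat n).rank = n := by rw [Matrix.rank_one]; simp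
    have h2 : (1 : Mat n).rank ≤ (c • (1 : Mat n)).rank := by
      conv_lhs => rw [← hinv]
      exact Matrix.rank_mul_le_right _ _
    have h3 : (c • (1 : Mat n)).rank ≤ n := by
      have := Matrix.rank_le_card_width (c • (1 : Mat n))
      simpa using this
    omega
  omega

/-- for `n > 2`, there is no quasi-orthogonal pair `(𝒜, ℬ)` in
`M_{2n}(ℂ)` with `𝒜` abelian of dimension `n + 1` and `ℬ ≅ M_n(ℂ)`. -/
theorem stmt5 {n : ℕ} (hn : 2 < n) :
    ¬ ∃ (𝒜 ℬ : StarSubalgebra ℂ (Mat (2 * n))),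
      QuasiOrth 𝒜 ℬ ∧
      (∀ x ∈ 𝒜, ∀ y ∈ 𝒜, x * y = y * x) ∧
      Module.finrank ℂ 𝒜 = n + 1 ∧
      Nonempty (ℬ ≃⋆ₐ[ℂ] Mat n) := by
  rintro ⟨𝒜, ℬ, hQO, habel, hdim, ⟨φ⟩⟩
  haveI : NeZero n := ⟨by omega⟩
  -- the system of matrix units in ℬ
  set e : Fin n → Fin n → Mat (2*n) :=
    fun j k => (φ.symm (single j k 1) : Mat (2*n)) with he
  have heB : ∀ j k, e j k ∈ ℬ := fun j k => (φ.symm (single j k 1)).2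
  have hcoe_mul : ∀ X Y : Mat n,
      (φ.symm X : Mat (2*n)) * (φ.symm Y : Mat (2*n)) = ((φ.symm (X * Y) : ℬ) : Mat (2*n)) := by
    intro X Y
    rw [_root_.map_mul]
    rfl
  have hemul : ∀ j k l, e j k * e k l = e j l := by
    intro j k l
    rw [he]
    show (φ.symm (single j k 1) : Mat (2*n)) * (φ.symm (single k l 1) : Mat (2*n)) = _
    rw [hcoe_mul]
    congr 2
    rw [Matrix.single_mul_single_same, one_mul]
  have hemul0 : ∀ (j k k' l : Fin n), k ≠ k' → e j k * e k' l = 0 := by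
    intro j k k' l hkk
    rw [he]
    show (φ.symm (single j k 1) : Mat (2*n)) * (φ.symm (single k' l 1) : Mat (2*n)) = _
    rw [hcoe_mul]
    have h0 : single j k (1:ℂ) * single k' l 1 = 0 :=
      Matrix.single_mul_single_of_ne (i := j) (j := k) (k := k') (h := hkk) (c := 1) (d := 1)
    rw [h0, map_zero]
    rfl
  have hstd : ∀ j k : Fin n, star (single j k (1:ℂ)) = single k j 1 := by
    intro j k
    ext a b
    rw [Matrix.star_apply]
    simp only [Matrix.single, Matrix.of_apply]
    by_cases h1 : j = b <;> by_cases h2 : k = a <;> simp [h1, h2]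
  have hestar : ∀ j k, star (e j k) = e k j := by
    intro j k
    rw [he]
    show star ((φ.symm (single j k 1) : ℬ) : Mat (2*n)) = _
    have h1 : star ((φ.symm (single j k 1) : ℬ) : Mat (2*n))
        = ((star (φ.symm (single j k 1)) : ℬ) : Mat (2*n)) := rfl
    rw [h1, ← map_star, hstd]
  have hsum : ∑ j, e j j = 1 := by
    have h1 : (∑ j, single j j (1:ℂ) : Mat n) = 1 := by
      ext a b
      rw [Matrix.sum_apply]
      simp only [Matrix.single, Matrix.of_apply, Matrix.one_apply]
      by_cases hab : a = b
      · subst hab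
        rw [Finset.sum_eq_single a]
        · simp
        · intro c _ hca
          simp [hca]
        · simp
      · rw [Finset.sum_eq_zero]
        · simp [hab]
        · intro c _
          by_cases h1 : c = a <;> by_cases h2 : c = b
          · exact absurd (h1.symm.trans h2) hab
          · simp [h2]
          · simp [h1]
          · simp [h1]
    calc ∑ j, e j j = ((∑ j, φ.symm (single j j 1) : ℬ) : Mat (2*n)) := by
          rw [AddSubmonoidClass.coe_finset_sum]
      _ = ((φ.symm (∑ j, single j j 1) : ℬ) : Mat (2*n)) := by rw [map_sum]
      _ = ((φ.symm 1 : ℬ) : Mat (2*n)) := by rw [h1]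
      _ = 1 := by rw [_root_.map_one]; rfl
  have htrace1 : (1 : Mat (2*n)).trace = ((2*n : ℕ) : ℂ) := by
    rw [Matrix.trace_one]
    simp
  have htr00 : (e 0 0).trace = 2 := by
    have hall : ∀ j, (e j j).trace = (e 0 0).trace := by
      intro j
      have h1 : e j 0 * e 0 j = e j j := hemul j 0 j
      have h2 : e 0 j * e j 0 = e 0 0 := hemul 0 j 0
      rw [← h1, Matrix.trace_mul_comm, h2]
    have hsum' : ∑ j : Fin n, (e j j).trace = ((2*n : ℕ) : ℂ) := by
      rw [← Matrix.trace_sum, hsum, htrace1]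
    rw [Finset.sum_congr rfl (fun j _ => hall j), Finset.sum_const, Finset.card_univ,
      Fintype.card_fin] at hsum'
    have hn0 : (n : ℂ) ≠ 0 := by
      simp
      omega
    have : (n : ℂ) * (e 0 0).trace = (n : ℂ) * 2 := by
      rw [← nsmul_eq_mul, hsum']
      push_cast
      ring
    exact mul_left_cancel₀ hn0 this
  have htr : ∀ j k, (e j k).trace = if j = k then 2 else 0 := by
    intro j k
    by_cases hjk : j = k
    · subst hjk
      simp only [if_pos rfl]
      have h1 : e j 0 * e 0 j = e j j := hemul j 0 j
      have h2 : e 0 j * e j 0 = e 0 0 := hemul 0 j 0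
      rw [← h1, Matrix.trace_mul_comm, h2, htr00]
      simp
    · simp only [if_neg hjk]
      have h1 : e j k * e k k = e j k := hemul j k k
      have h2 : e k k * e j k = 0 := hemul0 k k j k (Ne.symm hjk)
      rw [← h1, Matrix.trace_mul_comm, h2, Matrix.trace_zero]
  -- the commutative algebra 𝒜 as a submodule
  set S : Submodule ℂ (Mat (2*n)) := Subalgebra.toSubmodule 𝒜.toSubalgebra with hS
  have hmemS : ∀ x, x ∈ S ↔ x ∈ 𝒜 := fun x => Iff.rfl
  have hone0 : (1 : Mat (2*n)) ≠ 0 := by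
    intro hcon
    have := congrFun (congrFun hcon ⟨0, by omega⟩) ⟨0, by omega⟩
    simp [Matrix.one_apply] at this
  obtain ⟨f, hfprops, hforth⟩ := corner_family (n+1) S
    (fun x hx y hy => (hmemS _).mpr (mul_mem ((hmemS x).mp hx) ((hmemS y).mp hy)))
    (fun x hx => (hmemS _).mpr (star_mem ((hmemS x).mp hx)))
    (fun x hx y hy => habel x hx y hy)
    1 (one_mem 𝒜) Matrix.isHermitian_one (one_mul 1) hone0
    (fun x _ => one_mul x)
    (by rw [← hdim]; rfl)
  -- key bound for each idempotent
  have hkey : ∀ i, ∃ t : ℕ, (f i).trace = t ∧ n ≤ 2 * t := by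
    intro i
    exact key_bound (by omega) (by omega) e hemul hestar htr
      (hfprops i).2.1 (hfprops i).2.2.1 (hfprops i).2.2.2
      (fun j k => hQO (f i) ((hmemS (f i)).mp (hfprops i).1) (e j k) (heB j k))
  choose t htrt hlow using hkey
  -- the sum of the idempotents
  set Q : Mat (2*n) := ∑ i, f i with hQdef
  have hQH : Q.IsHermitian := by
    show Qᴴ = Q
    rw [hQdef, Matrix.conjTranspose_sum]
    exact Finset.sum_congr rfl (fun i _ => (hfprops i).2.1)
  have hQ2 : Q * Q = Q := by
    rw [hQdef, Finset.sum_mul_sum]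
    apply Finset.sum_congr rfl
    intro i _
    rw [Finset.sum_eq_single i]
    · exact (hfprops i).2.2.1
    · intro j _ hji
      exact hforth i j (Ne.symm hji)
    · simp
  obtain ⟨TQ, vQ, _, htrQ⟩ := herm_idem_decomp hQH hQ2
  have hcard : TQ.card ≤ 2 * n := le_trans (Finset.card_le_univ TQ) (by simp)
  have htrsum : Q.trace = ((∑ i, t i : ℕ) : ℂ) := by
    rw [hQdef, Matrix.trace_sum]
    rw [Finset.sum_congr rfl (fun i _ => htrt i)]
    push_cast
    ring
  have hsum_nat : ∑ i, t i = TQ.card := by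
    have := htrsum.symm.trans htrQ
    exact_mod_cast this
  have hsum_le : ∑ i, t i ≤ 2 * n := hsum_nat ▸ hcard
  -- arithmetic contradiction
  have h1 : (n+1) * n ≤ 2 * ∑ i, t i := by
    calc (n+1) * n = ∑ _i : Fin (n+1), n := by
          rw [Finset.sum_const, Finset.card_univ, Fintype.card_fin, smul_eq_mul]
      _ ≤ ∑ i, 2 * t i := Finset.sum_le_sum (fun i _ => hlow i)
      _ = 2 * ∑ i, t i := by rw [Finset.mul_sum]
  have h4 : (n+1) * n ≤ 4 * n := le_trans h1 (by omega)
  have hn4 : n + 1 ≤ 4 := Nat.le_of_mul_le_mul_right (by omega) (show 0 < n by omega)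
  have hn3 : n = 3 := by omega
  have h2 : 2 * (n+1) ≤ ∑ i, t i := by
    calc 2 * (n+1) = ∑ _i : Fin (n+1), 2 := by
          rw [Finset.sum_const, Finset.card_univ, Fintype.card_fin, smul_eq_mul]; ring
      _ ≤ ∑ i, t i := Finset.sum_le_sum (fun i _ => by have := hlow i; omega)
  omega
end
end

section
/- Let 𝒜 and ℬ be quasi-orthogonal unital *-subalgebras of M_{2n}(ℂ) with ℬ a factor isomorphic to M_n(ℂ), and let P ∈ 𝒜 be a rank-one orthogonal projection. Then the linear map B ↦ Bx is injective on ℬ, where x is a unit vector spanning the range of P. -/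
open Matrix BigOperators

noncomputable section

lemma eq_zero_of_trace_conj {m : ℕ} (B : Mat m) (h : (Bᴴ * B).trace = 0) : B = 0 := by
  have h1 : (Bᴴ * B).trace = ∑ i, ∑ j, (Complex.normSq (B j i) : ℂ) := by
    simp [Matrix.trace, Matrix.mul_apply, Matrix.diag, Matrix.conjTranspose_apply,
      Complex.normSq_eq_conj_mul_self]
  rw [h1] at h
  have h2 : ∑ i, ∑ j, Complex.normSq (B j i) = 0 := by
    have := congrArg Complex.re h
    simpa using this
  ext i j
  have := (Finset.sum_eq_zero_iff_of_nonneg (fun k _ => Finset.sum_nonneg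
    (fun l _ => Complex.normSq_nonneg (B l k)))).mp h2 j (Finset.mem_univ j)
  have := (Finset.sum_eq_zero_iff_of_nonneg (fun l _ => Complex.normSq_nonneg (B l j))).mp this i
    (Finset.mem_univ i)
  simpa [Complex.normSq_eq_zero] using this


/-- if `𝒜, ℬ ⊆ M_{2n}(ℂ)` are quasi-orthogonal with `ℬ` a factor
isomorphic to `M_n(ℂ)`, and `P ∈ 𝒜` is the rank-one orthogonal projection onto
the line of a unit vector `x`, then `B ↦ Bx` is injective on `ℬ`. -/
theorem stmt6 {n : ℕ} (𝒜 ℬ : StarSubalgebra ℂ (Mat (2 * n)))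
    (h : QuasiOrth 𝒜 ℬ)
    (hfac : Nonempty (ℬ ≃⋆ₐ[ℂ] Mat n))
    (x : Fin (2 * n) → ℂ) (hx : ∑ i, star (x i) * x i = 1)
    (P : Mat (2 * n)) (hP : P = Matrix.of fun i j => x i * star (x j))
    (hPA : P ∈ 𝒜) :
    ∀ B₁ ∈ ℬ, ∀ B₂ ∈ ℬ, B₁.mulVec x = B₂.mulVec x → B₁ = B₂ := by
  intro B₁ hB₁ B₂ hB₂ hBx
  set B := B₁ - B₂ with hB
  have hBmem : B ∈ ℬ := sub_mem hB₁ hB₂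
  have hBv : B.mulVec x = 0 := by
    simp [hB, Matrix.sub_mulVec, hBx]
  have hCmem : Bᴴ * B ∈ ℬ := mul_mem (star_mem hBmem) hBmem
  -- trace of P
  have hTrP : P.trace = 1 := by
    rw [hP]
    simpa [Matrix.trace, Matrix.diag, mul_comm] using hx
  -- trace of P * C = ⟨x, C x⟩
  have hPC : (P * (Bᴴ * B)).trace = ∑ k, star (x k) * ((Bᴴ * B).mulVec x k) := by
    rw [hP]
    simp only [Matrix.trace, Matrix.diag, Matrix.mul_apply, Matrix.of_apply, Matrix.mulVec,
      dotProduct]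
    rw [Finset.sum_comm]
    congr 1
    ext k
    rw [Finset.mul_sum]
    congr 1
    ext i
    ring
  have hCx : (Bᴴ * B).mulVec x = 0 := by
    rw [← Matrix.mulVec_mulVec, hBv, Matrix.mulVec_zero]
  have hPCz : (P * (Bᴴ * B)).trace = 0 := by
    rw [hPC, hCx]; simp
  have := h P hPA (Bᴴ * B) hCmem
  rw [hPCz, hTrP, one_mul, mul_zero] at this
  have : B = 0 := eq_zero_of_trace_conj B this.symm
  have := sub_eq_zero.mp this
  exact this
end
end

section
/- Let 𝒜_1, 𝒜_2 be quasi-orthogonal unital *-subalgebras of M_n(ℂ), and suppose A_1 ∈ 𝒜_1 and A_2 ∈ 𝒜_2 are traceless elements satisfying A_1A_2 = 0. Then A_1 = 0 or A_2 = 0. -/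
open Matrix BigOperators

noncomputable section

lemma trace_star_self_eq_zero {n : ℕ} {A : Mat n}
    (h : (Aᴴ * A).trace = 0) : A = 0 := by
  have : ∑ i, ∑ j, Complex.normSq (A j i) = 0 := by
    have := congrArg Complex.re h
    simpa [Matrix.trace, Matrix.diag, Matrix.mul_apply, Complex.normSq,
      Complex.mul_re, Complex.conj_re, Complex.conj_im, mul_comm] using this
  ext i j
  have h1 : ∀ i ∈ Finset.univ, (0:ℝ) ≤ ∑ j, Complex.normSq (A j i) :=
    fun i _ => Finset.sum_nonneg fun j _ => Complex.normSq_nonneg _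
  have h2 := (Finset.sum_eq_zero_iff_of_nonneg h1).mp this j (Finset.mem_univ _)
  have h3 := (Finset.sum_eq_zero_iff_of_nonneg
    (fun j _ => Complex.normSq_nonneg (A j _))).mp h2 i (Finset.mem_univ _)
  simpa using Complex.normSq_eq_zero.mp h3

/-- for quasi-orthogonal `𝒜₁, 𝒜₂` and traceless `A₁ ∈ 𝒜₁`,
`A₂ ∈ 𝒜₂`, if `A₁A₂ = 0` then `A₁ = 0` or `A₂ = 0`. -/
theorem stmt10 {n : ℕ} (𝒜₁ 𝒜₂ : StarSubalgebra ℂ (Mat n))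
    (h : QuasiOrth 𝒜₁ 𝒜₂)
    (A₁ A₂ : Mat n) (h1 : A₁ ∈ 𝒜₁) (h2 : A₂ ∈ 𝒜₂)
    (t1 : A₁.trace = 0) (t2 : A₂.trace = 0)
    (hzero : A₁ * A₂ = 0) :
    A₁ = 0 ∨ A₂ = 0 := by
  rcases Nat.eq_zero_or_pos n with hn | hn
  · left; subst hn; ext i; exact absurd i.2 (by simp)
  have m1 : A₁ᴴ * A₁ ∈ 𝒜₁ := mul_mem (star_mem h1) h1
  have m2 : A₂ * A₂ᴴ ∈ 𝒜₂ := mul_mem h2 (star_mem h2)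
  have key := h _ m1 _ m2
  have lhs : ((A₁ᴴ * A₁) * (A₂ * A₂ᴴ)).trace = 0 := by
    have : (A₁ᴴ * A₁) * (A₂ * A₂ᴴ) = A₁ᴴ * ((A₁ * A₂) * A₂ᴴ) := by noncomm_ring
    rw [this, hzero, zero_mul, mul_zero, Matrix.trace_zero]
  rw [lhs, mul_zero] at key
  rcases mul_eq_zero.mp key.symm with hz | hz
  · left; exact trace_star_self_eq_zero hz
  · right
    rw [Matrix.trace_mul_comm] at hz
    exact trace_star_self_eq_zero hz
end
end

section
/- Let 𝒜_1, 𝒜_2 be quasi-orthogonal unital *-subalgebras of M_n(ℂ), let A_1 ∈ 𝒜_1 and A_2 ∈ 𝒜_2 be traceless, and set A = A_1 + A_2. If A² ∈ 𝒜_1 + 𝒜_2 (as a linear subspace), then A_1A_2 + A_2A_1 = 0, i.e., A_1 and A_2 anti-commute. -/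
open Matrix BigOperators

noncomputable section

open scoped ComplexOrder in
lemma aux_trace_zero {m : ℕ} {A : Mat m} (h : (Aᴴ * A).trace = 0) : A = 0 := by
  have h' : ∀ j : Fin m, (Aᴴ * A) j j = 0 := by
    have := (Fintype.sum_eq_zero_iff_of_nonneg (f := fun j : Fin m => (Aᴴ * A) j j)
      (fun j => by
        show (0:ℂ) ≤ _
        simp only [Matrix.mul_apply, Matrix.conjTranspose_apply]
        exact Finset.sum_nonneg fun i _ => star_mul_self_nonneg _)).mp h
    intro j; exact congrFun this j
  ext i j
  have hj := h' j
  simp only [Matrix.mul_apply, Matrix.conjTranspose_apply] at hj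
  have := (Fintype.sum_eq_zero_iff_of_nonneg (f := fun i : Fin m => star (A i j) * A i j)
    (fun i => star_mul_self_nonneg _)).mp hj
  have hi := congrFun this i
  simp only [Pi.zero_apply, mul_eq_zero] at hi
  rcases hi with hi | hi
  · simpa using congrArg star hi
  · exact hi

/-- for quasi-orthogonal `𝒜₁, 𝒜₂` and traceless `A₁ ∈ 𝒜₁`,
`A₂ ∈ 𝒜₂`, if `(A₁ + A₂)² ∈ 𝒜₁ + 𝒜₂` then `A₁` and `A₂` anti-commute. -/
theorem stmt12 {n : ℕ} (𝒜₁ 𝒜₂ : StarSubalgebra ℂ (Mat n))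
    (h : QuasiOrth 𝒜₁ 𝒜₂)
    (A₁ A₂ : Mat n) (h1 : A₁ ∈ 𝒜₁) (h2 : A₂ ∈ 𝒜₂)
    (t1 : A₁.trace = 0) (t2 : A₂.trace = 0)
    (hsq : (A₁ + A₂) * (A₁ + A₂) ∈
      Subalgebra.toSubmodule 𝒜₁.toSubalgebra ⊔ Subalgebra.toSubmodule 𝒜₂.toSubalgebra) :
    A₁ * A₂ + A₂ * A₁ = 0 := by
  rcases Nat.eq_zero_or_pos n with rfl | hn
  · ext i j; exact i.elim0
  have hnz : (n : ℂ) ≠ 0 := Nat.cast_ne_zero.mpr hn.ne'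
  set X : Mat n := A₁ * A₂ + A₂ * A₁ with hX
  have hXmem : X ∈ Subalgebra.toSubmodule 𝒜₁.toSubalgebra ⊔ Subalgebra.toSubmodule 𝒜₂.toSubalgebra := by
    have hsq1 : A₁ * A₁ ∈ (Subalgebra.toSubmodule 𝒜₁.toSubalgebra ⊔ Subalgebra.toSubmodule 𝒜₂.toSubalgebra) :=
      Submodule.mem_sup_left ((Subalgebra.mem_toSubmodule _).mpr (mul_mem h1 h1))
    have hsq2 : A₂ * A₂ ∈ (Subalgebra.toSubmodule 𝒜₁.toSubalgebra ⊔ Subalgebra.toSubmodule 𝒜₂.toSubalgebra) :=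
      Submodule.mem_sup_right ((Subalgebra.mem_toSubmodule _).mpr (mul_mem h2 h2))
    have hhh : X = (A₁ + A₂) * (A₁ + A₂) - A₁ * A₁ - A₂ * A₂ := by
      rw [hX]; noncomm_ring
    rw [hhh]
    exact sub_mem (sub_mem hsq hsq1) hsq2
  have t1' : (A₁ᴴ).trace = 0 := by rw [Matrix.trace_conjTranspose, t1, star_zero]
  have t2' : (A₂ᴴ).trace = 0 := by rw [Matrix.trace_conjTranspose, t2, star_zero]
  have h1' : A₁ᴴ ∈ 𝒜₁ := star_mem h1
  have h2' : A₂ᴴ ∈ 𝒜₂ := star_mem h2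
  have hXH : Xᴴ = A₂ᴴ * A₁ᴴ + A₁ᴴ * A₂ᴴ := by
    rw [hX]; simp [Matrix.conjTranspose_add, Matrix.conjTranspose_mul]
  have key1 : ∀ B ∈ 𝒜₁, (Xᴴ * B).trace = 0 := by
    intro B hB
    have e1 : (n : ℂ) * ((A₁ᴴ * B) * A₂ᴴ).trace = (A₁ᴴ * B).trace * (A₂ᴴ).trace :=
      h _ (mul_mem h1' hB) _ h2'
    have e2 : (n : ℂ) * ((B * A₁ᴴ) * A₂ᴴ).trace = (B * A₁ᴴ).trace * (A₂ᴴ).trace :=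
      h _ (mul_mem hB h1') _ h2'
    rw [t2', mul_zero] at e1 e2
    have e1' : ((A₁ᴴ * B) * A₂ᴴ).trace = 0 := (mul_eq_zero.mp e1).resolve_left hnz
    have e2' : ((B * A₁ᴴ) * A₂ᴴ).trace = 0 := (mul_eq_zero.mp e2).resolve_left hnz
    have c1 : (A₂ᴴ * A₁ᴴ * B).trace = ((A₁ᴴ * B) * A₂ᴴ).trace :=
      (Matrix.trace_mul_cycle A₁ᴴ B A₂ᴴ).symm
    have c2 : (A₁ᴴ * A₂ᴴ * B).trace = ((B * A₁ᴴ) * A₂ᴴ).trace := by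
      rw [Matrix.trace_mul_cycle A₁ᴴ A₂ᴴ B]
    rw [hXH, Matrix.add_mul, Matrix.trace_add, c1, c2, e1', e2', add_zero]
  have key2 : ∀ B ∈ 𝒜₂, (Xᴴ * B).trace = 0 := by
    intro B hB
    have e1 : (n : ℂ) * (A₁ᴴ * (B * A₂ᴴ)).trace = (A₁ᴴ).trace * (B * A₂ᴴ).trace :=
      h _ h1' _ (mul_mem hB h2')
    have e2 : (n : ℂ) * (A₁ᴴ * (A₂ᴴ * B)).trace = (A₁ᴴ).trace * (A₂ᴴ * B).trace :=
      h _ h1' _ (mul_mem h2' hB)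
    rw [t1', zero_mul] at e1 e2
    have e1' : (A₁ᴴ * (B * A₂ᴴ)).trace = 0 := (mul_eq_zero.mp e1).resolve_left hnz
    have e2' : (A₁ᴴ * (A₂ᴴ * B)).trace = 0 := (mul_eq_zero.mp e2).resolve_left hnz
    have c1 : (A₂ᴴ * A₁ᴴ * B).trace = (A₁ᴴ * (B * A₂ᴴ)).trace := by
      rw [Matrix.trace_mul_cycle A₂ᴴ A₁ᴴ B, Matrix.trace_mul_cycle B A₂ᴴ A₁ᴴ, Matrix.mul_assoc]
    have c2 : (A₁ᴴ * A₂ᴴ * B).trace = (A₁ᴴ * (A₂ᴴ * B)).trace := by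
      rw [Matrix.mul_assoc]
    rw [hXH, Matrix.add_mul, Matrix.trace_add, c1, c2, e1', e2', add_zero]
  rcases Submodule.mem_sup.mp hXmem with ⟨B₁, hB₁, B₂, hB₂, hXeq⟩
  have hfin : (Xᴴ * X).trace = 0 := by
    calc (Xᴴ * X).trace = (Xᴴ * B₁).trace + (Xᴴ * B₂).trace := by
          rw [← Matrix.trace_add, ← Matrix.mul_add, hXeq]
      _ = 0 := by rw [key1 B₁ hB₁, key2 B₂ hB₂, add_zero]
  exact aux_trace_zero hfin
end
end

section
/- Let 𝒜_1, 𝒜_2 be quasi-orthogonal unital *-subalgebras of M_n(ℂ) and ℬ a unital *-subalgebra with ℬ ⊆ 𝒜_1 + 𝒜_2 (as a linear subspace). Then either ℬ ⊆ 𝒜_1, or ℬ ⊆ 𝒜_2, or ℬ is isomorphic to ℂ² (i.e., dim ℬ ≤ 2 and ℬ is abelian). -/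
open Matrix BigOperators

noncomputable section

namespace Stmt13Aux

/-- The linear equivalence between matrices and Euclidean space, carrying the
Frobenius/Hilbert–Schmidt inner product. -/
def matE {n : ℕ} : Mat n ≃ₗ[ℂ] EuclideanSpace ℂ (Fin n × Fin n) where
  toFun A := WithLp.toLp 2 (fun p : Fin n × Fin n => A p.1 p.2)
  invFun f := fun i j => f (i, j)
  map_add' _ _ := rfl
  map_smul' _ _ := rfl
  left_inv _ := rfl
  right_inv _ := rfl

lemma inner_matE {n : ℕ} (A B : Mat n) :
    (inner ℂ (matE A) (matE B) : ℂ) = (Aᴴ * B).trace := by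
  simp only [PiLp.inner_apply, RCLike.inner_apply, Matrix.trace, Matrix.diag,
    Matrix.mul_apply, Matrix.conjTranspose_apply, Fintype.sum_prod_type]
  rw [Finset.sum_comm]
  exact Finset.sum_congr rfl fun _ _ => Finset.sum_congr rfl fun _ _ => mul_comm _ _

lemma trace_hmul_eq_normsq {n : ℕ} (A : Mat n) :
    (Aᴴ * A).trace = ((‖matE A‖ : ℂ))^2 := by
  rw [← inner_matE, inner_self_eq_norm_sq_to_K]; rfl

lemma trace_hmul_eq_zero_iff {n : ℕ} (A : Mat n) :
    (Aᴴ * A).trace = 0 ↔ A = 0 := by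
  rw [trace_hmul_eq_normsq]
  constructor
  · intro hz
    have h0 : ‖matE A‖ = 0 := by
      have h := sq_eq_zero_iff.mp hz
      exact_mod_cast h
    have h1 : matE A = 0 := norm_eq_zero.mp h0
    simpa using congrArg matE.symm h1
  · rintro rfl; simp

lemma norm_matE_conjTranspose {n : ℕ} (A : Mat n) :
    ‖matE Aᴴ‖ = ‖matE A‖ := by
  have h1 : ((‖matE Aᴴ‖ : ℂ))^2 = ((‖matE A‖ : ℂ))^2 := by
    rw [← trace_hmul_eq_normsq, ← trace_hmul_eq_normsq, conjTranspose_conjTranspose,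
      Matrix.trace_mul_comm]
  have h2 : (‖matE Aᴴ‖:ℝ)^2 = (‖matE A‖:ℝ)^2 := by exact_mod_cast h1
  nlinarith [norm_nonneg (matE Aᴴ), norm_nonneg (matE A)]

lemma tr_conj_sand {n : ℕ} (a b : Mat n) :
    ((a*b)ᴴ*(a*b)).trace = ((aᴴ*a)*(b*bᴴ)).trace := by
  calc ((a*b)ᴴ*(a*b)).trace = ((bᴴ*aᴴ)*(a*b)).trace := by rw [conjTranspose_mul]
    _ = ((a*b)*(bᴴ*aᴴ)).trace := Matrix.trace_mul_comm _ _
    _ = ((a*(b*bᴴ))*aᴴ).trace := by rw [Matrix.mul_assoc, Matrix.mul_assoc, Matrix.mul_assoc]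
    _ = ((aᴴ*(a*(b*bᴴ)))).trace := Matrix.trace_mul_comm _ _
    _ = ((aᴴ*a)*(b*bᴴ)).trace := by rw [Matrix.mul_assoc]

variable {n : ℕ} {𝒜₁ 𝒜₂ ℬ : StarSubalgebra ℂ (Mat n)}

/-- Normalized form of quasi-orthogonality. -/
lemma qo (h : QuasiOrth 𝒜₁ 𝒜₂) (hn : (n:ℂ) ≠ 0) {A B : Mat n}
    (hA : A ∈ 𝒜₁) (hB : B ∈ 𝒜₂) :
    (A * B).trace = A.trace * B.trace / n := by
  field_simp
  rw [mul_comm]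
  exact h A hA B hB

/-- Decomposition of a traceless element of `ℬ` into traceless components. -/
lemma decomp (hn : (n:ℂ) ≠ 0)
    (hsub : Subalgebra.toSubmodule ℬ.toSubalgebra ≤
      Subalgebra.toSubmodule 𝒜₁.toSubalgebra ⊔ Subalgebra.toSubmodule 𝒜₂.toSubalgebra)
    {b : Mat n} (hb : b ∈ ℬ) (htr : b.trace = 0) :
    ∃ p q : Mat n, p ∈ 𝒜₁ ∧ q ∈ 𝒜₂ ∧ p.trace = 0 ∧ q.trace = 0 ∧ b = p + q := by
  obtain ⟨y, hy, z, hz, hyz⟩ := Submodule.mem_sup.mp (hsub hb)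
  rw [Subalgebra.mem_toSubmodule] at hy hz
  refine ⟨y - (y.trace / n) • 1, z - (z.trace / n) • 1, ?_, ?_, ?_, ?_, ?_⟩
  · exact sub_mem hy (SMulMemClass.smul_mem _ (one_mem _))
  · exact sub_mem hz (SMulMemClass.smul_mem _ (one_mem _))
  · simp [Matrix.trace_smul, Matrix.trace_one]
    field_simp
    simp
  · simp [Matrix.trace_smul, Matrix.trace_one]
    field_simp
    simp
  · have htr' : y.trace + z.trace = 0 := by
      rw [← Matrix.trace_add, hyz, htr]
    have : b = y + z := hyz.symm
    rw [this]
    rw [sub_add_sub_comm, ← add_smul]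
    rw [← add_div, htr']
    simp

/-- The key cross-term identity: for traceless `x y ∈ ℬ` with components
`x₁, x₂` and `y₁, y₂`, we have `x₁ y₂ = -(x₂ y₁)`. -/
lemma cross (h : QuasiOrth 𝒜₁ 𝒜₂) (hn : (n:ℂ) ≠ 0)
    (hsub : Subalgebra.toSubmodule ℬ.toSubalgebra ≤
      Subalgebra.toSubmodule 𝒜₁.toSubalgebra ⊔ Subalgebra.toSubmodule 𝒜₂.toSubalgebra)
    {x y x₁ x₂ y₁ y₂ : Mat n}
    (hxB : x ∈ ℬ) (hyB : y ∈ ℬ)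
    (hx1 : x₁ ∈ 𝒜₁) (hx2 : x₂ ∈ 𝒜₂) (hy1 : y₁ ∈ 𝒜₁) (hy2 : y₂ ∈ 𝒜₂)
    (htx1 : x₁.trace = 0) (htx2 : x₂.trace = 0)
    (hty1 : y₁.trace = 0) (hty2 : y₂.trace = 0)
    (hx : x = x₁ + x₂) (hy : y = y₁ + y₂) :
    x₁ * y₂ = -(x₂ * y₁) := by
  have star_mem₁ : ∀ {a : Mat n}, a ∈ 𝒜₁ → aᴴ ∈ 𝒜₁ := fun {a} ha =>
    (Matrix.star_eq_conjTranspose a) ▸ star_mem ha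
  have star_mem₂ : ∀ {a : Mat n}, a ∈ 𝒜₂ → aᴴ ∈ 𝒜₂ := fun {a} ha =>
    (Matrix.star_eq_conjTranspose a) ▸ star_mem ha
  set C : Mat n := x₁ * y₂ + x₂ * y₁ with hC
  -- C is orthogonal to everything in 𝒜₁
  have key1 : ∀ U : Mat n, U ∈ 𝒜₁ → (Cᴴ * U).trace = 0 := by
    intro U hU
    have e1 : ((x₁*y₂)ᴴ * U).trace = 0 := by
      have h1 : ((x₁*y₂)ᴴ * U) = y₂ᴴ * (x₁ᴴ * U) := by
        rw [conjTranspose_mul, Matrix.mul_assoc]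
      rw [h1, Matrix.trace_mul_comm, qo h hn (mul_mem (star_mem₁ hx1) hU) (star_mem₂ hy2),
        Matrix.trace_conjTranspose, hty2]
      simp
    have e2 : ((x₂*y₁)ᴴ * U).trace = 0 := by
      have h1 : ((x₂*y₁)ᴴ * U) = y₁ᴴ * (x₂ᴴ * U) := by
        rw [conjTranspose_mul, Matrix.mul_assoc]
      rw [h1, ← Matrix.mul_assoc, Matrix.trace_mul_comm,  ← Matrix.mul_assoc,
        qo h hn (mul_mem hU (star_mem₁ hy1)) (star_mem₂ hx2),
        Matrix.trace_conjTranspose, htx2]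
      simp
    rw [hC, conjTranspose_add, Matrix.add_mul, Matrix.trace_add, e1, e2, add_zero]
  have key2 : ∀ V : Mat n, V ∈ 𝒜₂ → (Cᴴ * V).trace = 0 := by
    intro V hV
    have e1 : ((x₁*y₂)ᴴ * V).trace = 0 := by
      rw [conjTranspose_mul, Matrix.trace_mul_cycle, Matrix.trace_mul_cycle, Matrix.mul_assoc,
        qo h hn (star_mem₁ hx1) (mul_mem hV (star_mem₂ hy2)),
        Matrix.trace_conjTranspose, htx1]
      simp
    have e2 : ((x₂*y₁)ᴴ * V).trace = 0 := by
      have h1 : ((x₂*y₁)ᴴ * V) = y₁ᴴ * (x₂ᴴ * V) := by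
        rw [conjTranspose_mul, Matrix.mul_assoc]
      rw [h1, qo h hn (star_mem₁ hy1) (mul_mem (star_mem₂ hx2) hV),
        Matrix.trace_conjTranspose, hty1]
      simp
    rw [hC, conjTranspose_add, Matrix.add_mul, Matrix.trace_add, e1, e2, add_zero]
  -- x*y decomposes, showing C ∈ 𝒜₁ + 𝒜₂
  have hxyB : x * y ∈ ℬ := mul_mem hxB hyB
  obtain ⟨u, hu, v, hv, huv⟩ := Submodule.mem_sup.mp (hsub hxyB)
  rw [Subalgebra.mem_toSubmodule] at hu hv
  have hCuv : C = (u - x₁ * y₁) + (v - x₂ * y₂) := by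
    have hxy : x * y = x₁ * y₁ + x₂ * y₂ + C := by
      rw [hx, hy, hC]; noncomm_ring
    have : u + v = x₁ * y₁ + x₂ * y₂ + C := by rw [huv, hxy]
    rw [sub_add_sub_comm, this]; abel
  have hCC : (Cᴴ * C).trace = 0 := by
    rw [show (Cᴴ*C) = Cᴴ*(u - x₁*y₁) + Cᴴ*(v - x₂*y₂) from by
      rw [← Matrix.mul_add, ← hCuv], Matrix.trace_add,
      key1 _ (sub_mem hu (mul_mem hx1 hy1)), key2 _ (sub_mem hv (mul_mem hx2 hy2)), add_zero]
  have hC0 : C = 0 := (trace_hmul_eq_zero_iff C).mp hCC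
  have := hC0
  rw [hC] at this
  linear_combination (norm := noncomm_ring) this

lemma star_mem' {𝒜 : StarSubalgebra ℂ (Mat n)} {a : Mat n} (ha : a ∈ 𝒜) : aᴴ ∈ 𝒜 :=
  (Matrix.star_eq_conjTranspose a) ▸ star_mem ha

/-- The norm identity `‖x₁‖‖y₂‖ = ‖x₂‖‖y₁‖` (in squared trace form). -/
lemma normId (h : QuasiOrth 𝒜₁ 𝒜₂) (hn : (n:ℂ) ≠ 0)
    (hsub : Subalgebra.toSubmodule ℬ.toSubalgebra ≤
      Subalgebra.toSubmodule 𝒜₁.toSubalgebra ⊔ Subalgebra.toSubmodule 𝒜₂.toSubalgebra)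
    {x y x₁ x₂ y₁ y₂ : Mat n}
    (hxB : x ∈ ℬ) (hyB : y ∈ ℬ)
    (hx1 : x₁ ∈ 𝒜₁) (hx2 : x₂ ∈ 𝒜₂) (hy1 : y₁ ∈ 𝒜₁) (hy2 : y₂ ∈ 𝒜₂)
    (htx1 : x₁.trace = 0) (htx2 : x₂.trace = 0)
    (hty1 : y₁.trace = 0) (hty2 : y₂.trace = 0)
    (hx : x = x₁ + x₂) (hy : y = y₁ + y₂) :
    (x₁ᴴ*x₁).trace * (y₂ᴴ*y₂).trace = (x₂ᴴ*x₂).trace * (y₁ᴴ*y₁).trace := by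
  have hc := cross h hn hsub hxB hyB hx1 hx2 hy1 hy2 htx1 htx2 hty1 hty2 hx hy
  have e0 : ((x₁*y₂)ᴴ*(x₁*y₂)).trace = ((x₂*y₁)ᴴ*(x₂*y₁)).trace := by
    rw [hc]; simp
  rw [tr_conj_sand, tr_conj_sand,
    qo h hn (mul_mem (star_mem' hx1) hx1) (mul_mem hy2 (star_mem' hy2)),
    Matrix.trace_mul_comm (x₂ᴴ*x₂),
    qo h hn (mul_mem hy1 (star_mem' hy1)) (mul_mem (star_mem' hx2) hx2),
    Matrix.trace_mul_comm y₂, Matrix.trace_mul_comm y₁] at e0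
  field_simp at e0
  linear_combination e0

/-- The key Cauchy–Schwarz-saturating identity. -/
lemma starEq (h : QuasiOrth 𝒜₁ 𝒜₂) (hn : (n:ℂ) ≠ 0)
    (hsub : Subalgebra.toSubmodule ℬ.toSubalgebra ≤
      Subalgebra.toSubmodule 𝒜₁.toSubalgebra ⊔ Subalgebra.toSubmodule 𝒜₂.toSubalgebra)
    {x y x₁ x₂ y₁ y₂ : Mat n}
    (hxB : x ∈ ℬ) (hyB : y ∈ ℬ)
    (hx1 : x₁ ∈ 𝒜₁) (hx2 : x₂ ∈ 𝒜₂) (hy1 : y₁ ∈ 𝒜₁) (hy2 : y₂ ∈ 𝒜₂)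
    (htx1 : x₁.trace = 0) (htx2 : x₂.trace = 0)
    (hty1 : y₁.trace = 0) (hty2 : y₂.trace = 0)
    (hx : x = x₁ + x₂) (hy : y = y₁ + y₂) :
    (starRingEnd ℂ) ((x₁*y₁).trace) * (x₂*y₂).trace = (x₂ᴴ*x₂).trace * (y₁ᴴ*y₁).trace := by
  have c1 := cross h hn hsub hxB hyB hx1 hx2 hy1 hy2 htx1 htx2 hty1 hty2 hx hy
  have c2 := cross h hn hsub ((Matrix.star_eq_conjTranspose x) ▸ star_mem hxB) hxB
    (star_mem' hx1) (star_mem' hx2) hx1 hx2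
    (by rw [Matrix.trace_conjTranspose, htx1, star_zero])
    (by rw [Matrix.trace_conjTranspose, htx2, star_zero]) htx1 htx2
    (by rw [hx, conjTranspose_add]) hx
  have M : (x₁*y₁)ᴴ*(x₂*y₂) = (x₂*y₁)ᴴ*(x₂*y₁) := by
    calc (x₁*y₁)ᴴ*(x₂*y₂) = y₁ᴴ*(x₁ᴴ*x₂)*y₂ := by
          rw [conjTranspose_mul]; noncomm_ring
      _ = y₁ᴴ*(-(x₂ᴴ*x₁))*y₂ := by rw [c2]
      _ = -((y₁ᴴ*x₂ᴴ)*(x₁*y₂)) := by noncomm_ring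
      _ = -((y₁ᴴ*x₂ᴴ)*(-(x₂*y₁))) := by rw [c1]
      _ = (x₂*y₁)ᴴ*(x₂*y₁) := by rw [conjTranspose_mul]; noncomm_ring
  have e0 := congrArg Matrix.trace M
  rw [tr_conj_sand, Matrix.trace_mul_comm (x₂ᴴ*x₂),
    qo h hn (mul_mem hy1 (star_mem' hy1)) (mul_mem (star_mem' hx2) hx2),
    qo h hn (star_mem' (mul_mem hx1 hy1)) (mul_mem hx2 hy2),
    Matrix.trace_conjTranspose, Matrix.trace_mul_comm y₁] at e0
  field_simp at e0
  simp only [Complex.star_def] at e0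
  linear_combination e0

end Stmt13Aux

/-- if `ℬ ⊆ 𝒜₁ + 𝒜₂` for quasi-orthogonal `𝒜₁, 𝒜₂`, then
`ℬ ⊆ 𝒜₁`, or `ℬ ⊆ 𝒜₂`, or `ℬ ≅ ℂ²` (i.e. `dim ℬ ≤ 2` and `ℬ` is abelian). -/
theorem stmt13 {n : ℕ} (𝒜₁ 𝒜₂ ℬ : StarSubalgebra ℂ (Mat n))
    (h : QuasiOrth 𝒜₁ 𝒜₂)
    (hsub : Subalgebra.toSubmodule ℬ.toSubalgebra ≤
      Subalgebra.toSubmodule 𝒜₁.toSubalgebra ⊔ Subalgebra.toSubmodule 𝒜₂.toSubalgebra) :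
    (∀ b ∈ ℬ, b ∈ 𝒜₁) ∨ (∀ b ∈ ℬ, b ∈ 𝒜₂) ∨
    (Module.finrank ℂ ℬ ≤ 2 ∧ ∀ x ∈ ℬ, ∀ y ∈ ℬ, x * y = y * x) := by
  open Stmt13Aux in
  rcases Nat.eq_zero_or_pos n with hn0 | hnpos
  · left; intro b hb
    have hb0 : b = 0 := by subst hn0; ext i j; exact i.elim0
    rw [hb0]; exact zero_mem _
  have hn : (n:ℂ) ≠ 0 := Nat.cast_ne_zero.mpr hnpos.ne'
  by_cases hc1 : ∀ b ∈ ℬ, b ∈ 𝒜₁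
  · exact Or.inl hc1
  by_cases hc2 : ∀ b ∈ ℬ, b ∈ 𝒜₂
  · exact Or.inr (Or.inl hc2)
  right; right
  push_neg at hc1 hc2
  obtain ⟨b, hbB, hb1⟩ := hc1
  obtain ⟨c, hcB, hc2'⟩ := hc2
  -- traceless modification
  have mk : ∀ β : Mat n, β ∈ ℬ → (β - (β.trace/n) • 1) ∈ ℬ ∧ (β - (β.trace/n) • 1).trace = 0 := by
    intro β hβ
    refine ⟨sub_mem hβ (SMulMemClass.smul_mem _ (one_mem _)), ?_⟩
    simp [Matrix.trace_smul, Matrix.trace_one]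
    field_simp
    simp
  have mem_of : ∀ (𝒜 : StarSubalgebra ℂ (Mat n)) (β : Mat n),
      (β - (β.trace/n) • 1) ∈ 𝒜 → β ∈ 𝒜 := by
    intro 𝒜 β hβ
    have : β = (β - (β.trace/n) • 1) + (β.trace/n) • 1 := by abel
    rw [this]; exact add_mem hβ (SMulMemClass.smul_mem _ (one_mem _))
  set X := b - (b.trace/n) • 1 with hXdef
  obtain ⟨hXB, hXtr⟩ := mk b hbB
  obtain ⟨x₁, x₂, hx1, hx2, htx1, htx2, hxeq⟩ := decomp hn hsub hXB hXtr
  have hx2ne : x₂ ≠ 0 := by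
    intro h0
    exact hb1 (mem_of 𝒜₁ b (by show X ∈ 𝒜₁; rw [hXdef, hxeq, h0, add_zero]; exact hx1))
  set W := c - (c.trace/n) • 1 with hWdef
  obtain ⟨hWB, hWtr⟩ := mk c hcB
  obtain ⟨w₁, w₂, hw1, hw2, htw1, htw2, hweq⟩ := decomp hn hsub hWB hWtr
  have hw1ne : w₁ ≠ 0 := by
    intro h0
    exact hc2' (mem_of 𝒜₂ c (by show W ∈ 𝒜₂; rw [hWdef, hweq, h0, zero_add]; exact hw2))
  -- x₁ ≠ 0
  have hx1ne : x₁ ≠ 0 := by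
    intro h0
    have eN := normId h hn hsub hWB hXB hw1 hw2 hx1 hx2 htw1 htw2 htx1 htx2 hweq hxeq
    rw [h0] at eN
    simp only [Matrix.conjTranspose_zero, Matrix.mul_zero, Matrix.zero_mul,
      Matrix.trace_zero, mul_zero] at eN
    exact (mul_ne_zero (fun hz => hw1ne ((trace_hmul_eq_zero_iff w₁).mp hz))
      (fun hz => hx2ne ((trace_hmul_eq_zero_iff x₂).mp hz))) eN
  -- the central claim
  have key : ∀ y ∈ ℬ, y.trace = 0 → ∃ r : ℂ, y = r • Xᴴ := by
    intro y hyB hytr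
    obtain ⟨y₁, y₂, hy1, hy2, hty1, hty2, hyeq⟩ := decomp hn hsub hyB hytr
    by_cases hy0 : y = 0
    · exact ⟨0, by rw [hy0, zero_smul]⟩
    have eN := normId h hn hsub hXB hyB hx1 hx2 hy1 hy2 htx1 htx2 hty1 hty2 hxeq hyeq
    have hy1ne : y₁ ≠ 0 := by
      intro h0
      rw [h0] at eN
      simp only [Matrix.conjTranspose_zero, Matrix.mul_zero, Matrix.trace_zero, mul_zero] at eN
      have hy2z : y₂ = 0 := (trace_hmul_eq_zero_iff y₂).mp
        ((mul_eq_zero.mp eN).resolve_left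
          (fun hz => hx1ne ((trace_hmul_eq_zero_iff x₁).mp hz)))
      exact hy0 (by rw [hyeq, h0, hy2z, add_zero])
    have hy2ne : y₂ ≠ 0 := by
      intro h0
      rw [h0] at eN
      simp only [Matrix.conjTranspose_zero, Matrix.mul_zero, Matrix.trace_zero, mul_zero,
        zero_mul] at eN
      have hy1z : y₁ = 0 := (trace_hmul_eq_zero_iff y₁).mp
        ((mul_eq_zero.mp eN.symm).resolve_left
          (fun hz => hx2ne ((trace_hmul_eq_zero_iff x₂).mp hz)))
      exact hy0 (by rw [hyeq, hy1z, h0, add_zero])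
    -- norms
    have ha1p : (0:ℝ) < ‖matE x₁‖ :=
      norm_pos_iff.mpr (fun hz => hx1ne (by simpa using congrArg matE.symm hz))
    have ha2p : (0:ℝ) < ‖matE x₂‖ :=
      norm_pos_iff.mpr (fun hz => hx2ne (by simpa using congrArg matE.symm hz))
    have hb1p : (0:ℝ) < ‖matE y₁‖ :=
      norm_pos_iff.mpr (fun hz => hy1ne (by simpa using congrArg matE.symm hz))
    have hb2p : (0:ℝ) < ‖matE y₂‖ :=
      norm_pos_iff.mpr (fun hz => hy2ne (by simpa using congrArg matE.symm hz))
    -- the norm identity in real form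
    have eNr : ‖matE x₁‖ * ‖matE y₂‖ = ‖matE x₂‖ * ‖matE y₁‖ := by
      have hC : ((‖matE x₁‖:ℂ))^2 * ((‖matE y₂‖:ℂ))^2
          = ((‖matE x₂‖:ℂ))^2 * ((‖matE y₁‖:ℂ))^2 := by
        rw [← trace_hmul_eq_normsq, ← trace_hmul_eq_normsq, ← trace_hmul_eq_normsq,
          ← trace_hmul_eq_normsq]
        exact eN
      have hr : (‖matE x₁‖ * ‖matE y₂‖)^2 = (‖matE x₂‖ * ‖matE y₁‖)^2 := by
        exact_mod_cast (by push_cast; linear_combination hC :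
          (((‖matE x₁‖ * ‖matE y₂‖)^2 : ℝ) : ℂ) = (((‖matE x₂‖ * ‖matE y₁‖)^2 : ℝ) : ℂ))
      exact (sq_eq_sq₀ (by positivity) (by positivity)).mp hr
    -- the CS saturation
    have eS := starEq h hn hsub hXB hyB hx1 hx2 hy1 hy2 htx1 htx2 hty1 hty2 hxeq hyeq
    have i1 : (x₁ * y₁).trace = inner ℂ (matE x₁ᴴ) (matE y₁) := by
      rw [inner_matE, conjTranspose_conjTranspose]
    have i2 : (x₂ * y₂).trace = inner ℂ (matE x₂ᴴ) (matE y₂) := by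
      rw [inner_matE, conjTranspose_conjTranspose]
    have prodEq : ‖(inner ℂ (matE x₁ᴴ) (matE y₁) : ℂ)‖ * ‖(inner ℂ (matE x₂ᴴ) (matE y₂) : ℂ)‖
        = (‖matE x₂‖ * ‖matE y₁‖)^2 := by
      have hN := congrArg norm eS
      rw [i1, i2, norm_mul, RCLike.norm_conj, trace_hmul_eq_normsq x₂,
        trace_hmul_eq_normsq y₁, norm_mul, norm_pow, norm_pow, Complex.norm_real,
        Complex.norm_real, norm_norm, norm_norm] at hN
      rw [hN]; ring
    have cs1 : ‖(inner ℂ (matE x₁ᴴ) (matE y₁) : ℂ)‖ ≤ ‖matE x₁‖ * ‖matE y₁‖ := by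
      have hN := norm_inner_le_norm (𝕜 := ℂ) (matE x₁ᴴ) (matE y₁)
      rwa [norm_matE_conjTranspose] at hN
    have cs2 : ‖(inner ℂ (matE x₂ᴴ) (matE y₂) : ℂ)‖ ≤ ‖matE x₂‖ * ‖matE y₂‖ := by
      have hN := norm_inner_le_norm (𝕜 := ℂ) (matE x₂ᴴ) (matE y₂)
      rwa [norm_matE_conjTranspose] at hN
    -- saturation forces equality in both CS inequalities
    have hPQ : (‖matE x₁‖*‖matE y₁‖) * (‖matE x₂‖*‖matE y₂‖) = (‖matE x₂‖ * ‖matE y₁‖)^2 := by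
      linear_combination (‖matE x₂‖*‖matE y₁‖) * eNr
    have sat1 : ‖(inner ℂ (matE x₁ᴴ) (matE y₁) : ℂ)‖ = ‖matE x₁‖ * ‖matE y₁‖ := by
      refine le_antisymm cs1 ?_
      have h1 : (‖matE x₁‖*‖matE y₁‖) * (‖matE x₂‖*‖matE y₂‖)
          ≤ ‖(inner ℂ (matE x₁ᴴ) (matE y₁) : ℂ)‖ * (‖matE x₂‖*‖matE y₂‖) := by
        calc (‖matE x₁‖*‖matE y₁‖) * (‖matE x₂‖*‖matE y₂‖)
            = ‖(inner ℂ (matE x₁ᴴ) (matE y₁) : ℂ)‖ * ‖(inner ℂ (matE x₂ᴴ) (matE y₂) : ℂ)‖ := by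
              rw [prodEq, hPQ]
          _ ≤ _ := mul_le_mul_of_nonneg_left cs2 (norm_nonneg _)
      exact le_of_mul_le_mul_right h1 (by positivity)
    have sat2 : ‖(inner ℂ (matE x₂ᴴ) (matE y₂) : ℂ)‖ = ‖matE x₂‖ * ‖matE y₂‖ := by
      refine le_antisymm cs2 ?_
      have h1 : (‖matE x₁‖*‖matE y₁‖) * (‖matE x₂‖*‖matE y₂‖)
          ≤ (‖matE x₁‖*‖matE y₁‖) * ‖(inner ℂ (matE x₂ᴴ) (matE y₂) : ℂ)‖ := by
        calc (‖matE x₁‖*‖matE y₁‖) * (‖matE x₂‖*‖matE y₂‖)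
            = ‖(inner ℂ (matE x₁ᴴ) (matE y₁) : ℂ)‖ * ‖(inner ℂ (matE x₂ᴴ) (matE y₂) : ℂ)‖ := by
              rw [prodEq, hPQ]
          _ ≤ _ := mul_le_mul_of_nonneg_right cs1 (norm_nonneg _)
      exact le_of_mul_le_mul_left h1 (by positivity)
    -- extract the proportionality
    have hx1E : matE x₁ᴴ ≠ 0 := by
      simp only [ne_eq, LinearEquiv.map_eq_zero_iff, Matrix.conjTranspose_eq_zero]
      exact hx1ne
    have hx2E : matE x₂ᴴ ≠ 0 := by
      simp only [ne_eq, LinearEquiv.map_eq_zero_iff, Matrix.conjTranspose_eq_zero]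
      exact hx2ne
    have hy1E : matE y₁ ≠ 0 := by
      simp only [ne_eq, LinearEquiv.map_eq_zero_iff]; exact hy1ne
    have hy2E : matE y₂ ≠ 0 := by
      simp only [ne_eq, LinearEquiv.map_eq_zero_iff]; exact hy2ne
    obtain ⟨r, hr0, hry⟩ := (norm_inner_eq_norm_iff hx1E hy1E).mp
      (by rw [sat1, norm_matE_conjTranspose])
    obtain ⟨t, ht0, hty⟩ := (norm_inner_eq_norm_iff hx2E hy2E).mp
      (by rw [sat2, norm_matE_conjTranspose])
    have hy1x : y₁ = r • x₁ᴴ := by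
      apply matE.injective
      rw [_root_.map_smul, hry]
    have hy2x : y₂ = t • x₂ᴴ := by
      apply matE.injective
      rw [_root_.map_smul, hty]
    -- r = t
    have c1 := cross h hn hsub hXB hyB hx1 hx2 hy1 hy2 htx1 htx2 hty1 hty2 hxeq hyeq
    have cxx := cross h hn hsub hXB ((Matrix.star_eq_conjTranspose X) ▸ star_mem hXB)
      hx1 hx2 (star_mem' hx1) (star_mem' hx2) htx1 htx2
      (by rw [Matrix.trace_conjTranspose, htx1, star_zero])
      (by rw [Matrix.trace_conjTranspose, htx2, star_zero])
      hxeq (by rw [hXdef, hxeq, conjTranspose_add])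
    have hprod_ne : x₁ * x₂ᴴ ≠ 0 := by
      intro h0
      have : ((x₁*x₂ᴴ)ᴴ*(x₁*x₂ᴴ)).trace = 0 := by rw [h0]; simp
      rw [tr_conj_sand, conjTranspose_conjTranspose,
        qo h hn (mul_mem (star_mem' hx1) hx1) (mul_mem (star_mem' hx2) hx2)] at this
      have := mul_eq_zero.mp ((div_eq_zero_iff.mp this).resolve_right hn)
      rcases this with hz | hz
      · exact hx1ne ((trace_hmul_eq_zero_iff x₁).mp hz)
      · exact hx2ne ((trace_hmul_eq_zero_iff x₂).mp hz)
    have hrt : r = t := by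
      have e1 : x₁ * y₂ = t • (x₁ * x₂ᴴ) := by rw [hy2x, mul_smul_comm]
      have e2 : -(x₂ * y₁) = r • (x₁ * x₂ᴴ) := by
        rw [hy1x, mul_smul_comm, ← smul_neg, ← cxx]
      have : (t - r) • (x₁ * x₂ᴴ) = 0 := by
        rw [sub_smul, ← e1, ← e2, c1, sub_self]
      rcases smul_eq_zero.mp this with hz | hz
      · exact (sub_eq_zero.mp hz).symm
      · exact absurd hz hprod_ne
    refine ⟨r, ?_⟩
    rw [hyeq, hy1x, hy2x, ← hrt, hXdef, hxeq, conjTranspose_add, smul_add]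
  -- conclusions
  constructor
  · -- finrank bound
    have hle : Subalgebra.toSubmodule ℬ.toSubalgebra ≤
        Submodule.span ℂ (↑({1, Xᴴ} : Finset (Mat n)) : Set (Mat n)) := by
      intro z hz
      rw [Subalgebra.mem_toSubmodule] at hz
      obtain ⟨hz'B, hz'tr⟩ := mk z hz
      obtain ⟨r, hr⟩ := key _ hz'B hz'tr
      have hzeq : z = (z.trace/n) • (1 : Mat n) + r • Xᴴ := by
        rw [← hr]; abel
      rw [hzeq]
      exact Submodule.add_mem _
        (Submodule.smul_mem _ _ (Submodule.subset_span (by simp)))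
        (Submodule.smul_mem _ _ (Submodule.subset_span (by simp)))
    calc Module.finrank ℂ ℬ
        = Module.finrank ℂ (Subalgebra.toSubmodule ℬ.toSubalgebra) := rfl
      _ ≤ Module.finrank ℂ (Submodule.span ℂ (↑({1, Xᴴ} : Finset (Mat n)) : Set (Mat n))) :=
          Submodule.finrank_mono hle
      _ ≤ ({1, Xᴴ} : Finset (Mat n)).card := finrank_span_finset_le_card _
      _ ≤ 2 := Finset.card_insert_le _ _ |>.trans (by simp)
  · -- commutativity
    intro z hz w hw
    obtain ⟨hz'B, hz'tr⟩ := mk z hz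
    obtain ⟨r, hr⟩ := key _ hz'B hz'tr
    obtain ⟨hw'B, hw'tr⟩ := mk w hw
    obtain ⟨t, ht⟩ := key _ hw'B hw'tr
    have hzeq : z = (z.trace/n) • (1 : Mat n) + r • Xᴴ := by rw [← hr]; abel
    have hweq : w = (w.trace/n) • (1 : Mat n) + t • Xᴴ := by rw [← ht]; abel
    rw [hzeq, hweq]
    simp only [mul_add, add_mul, smul_mul_assoc, mul_smul_comm, one_mul, mul_one, smul_smul]
    match_scalars <;> ring
end
end

section
/- For unital *-subalgebras 𝒜, ℬ of M_n(ℂ), define c(𝒜,ℬ) := Tr(E_𝒜 E_ℬ), the trace of the composition of the Hilbert–Schmidt orthogonal projections onto 𝒜 and ℬ (viewed as linear maps M_n(ℂ) → M_n(ℂ)). Then 1 ≤ c(𝒜,ℬ) ≤ min{dim 𝒜, dim ℬ}, and c(𝒜,ℬ) = 1 if and only if 𝒜 and ℬ are quasi-orthogonal. -/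
open Matrix BigOperators

noncomputable section

/-- `E` is the orthogonal projection of `M_n(ℂ)` (with the Hilbert–Schmidt inner
product `⟨X, Y⟩ = Tr(X*Y)`) onto the subspace `S`. -/
def IsHSProj {n : ℕ} (S : Submodule ℂ (Mat n)) (E : Mat n →ₗ[ℂ] Mat n) : Prop :=
  (∀ X, E X ∈ S) ∧ (∀ X ∈ S, E X = X) ∧
    (∀ X Y, (star (E X) * Y).trace = (star X * E Y).trace)

namespace Stmt15Aux

variable {n : ℕ}

/-- standard matrix units -/
def e (p : Fin n × Fin n) : Mat n := Matrix.single p.1 p.2 1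

/-- the HS squared norm -/
def hsq (X : Mat n) : ℝ := ∑ i, ∑ j, Complex.normSq (X i j)

lemma hsq_nonneg (X : Mat n) : 0 ≤ hsq X :=
  Finset.sum_nonneg fun _ _ => Finset.sum_nonneg fun _ _ => Complex.normSq_nonneg _

lemma hsq_eq_zero {X : Mat n} (h : hsq X = 0) : X = 0 := by
  ext i j
  have h1 : ∀ i ∈ Finset.univ, (0:ℝ) ≤ ∑ j, Complex.normSq (X i j) :=
    fun _ _ => Finset.sum_nonneg fun _ _ => Complex.normSq_nonneg _
  have h2 := (Finset.sum_eq_zero_iff_of_nonneg h1).1 h i (Finset.mem_univ i)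
  have h3 := (Finset.sum_eq_zero_iff_of_nonneg
    (fun _ _ => Complex.normSq_nonneg _)).1 h2 j (Finset.mem_univ j)
  simpa [Complex.normSq_eq_zero] using h3

lemma tr_star_mul_self (X : Mat n) :
    (star X * X).trace = ((hsq X : ℝ) : ℂ) := by
  simp only [Matrix.trace, Matrix.diag, Matrix.mul_apply, hsq]
  push_cast
  rw [Finset.sum_comm]
  refine Finset.sum_congr rfl fun i _ => Finset.sum_congr rfl fun j _ => ?_
  simp [Matrix.star_apply, Complex.normSq_eq_conj_mul_self]

lemma tr_star_swap (U V : Mat n) :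
    (star V * U).trace = star ((star U * V).trace) := by
  have : star V * U = star (star U * V) := by
    rw [StarMul.star_mul, star_star]
  rw [this, Matrix.star_eq_conjTranspose, Matrix.trace_conjTranspose]

lemma pyth {U V : Mat n} (h : (star U * V).trace = 0) :
    (star (U + V) * (U + V)).trace = (star U * U).trace + (star V * V).trace := by
  have h2 : (star V * U).trace = 0 := by rw [tr_star_swap, h, star_zero]
  simp [star_add, add_mul, mul_add, Matrix.trace_add, h, h2]

/-- the trace of an endomorphism of `Mat n` via matrix units -/
lemma trace_lm (f : Mat n →ₗ[ℂ] Mat n) :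
    LinearMap.trace ℂ (Mat n) f = ∑ p : Fin n × Fin n, (f (e p)) p.1 p.2 := by
  rw [LinearMap.trace_eq_matrix_trace ℂ (Matrix.stdBasis ℂ (Fin n) (Fin n)) f, Matrix.trace]
  refine Finset.sum_congr rfl fun p _ => ?_
  have he : Matrix.stdBasis ℂ (Fin n) (Fin n) p = e p := by
    cases p; exact Matrix.stdBasis_eq_single ℂ _ _
  rw [Matrix.diag, LinearMap.toMatrix_apply, he]
  simp [Matrix.stdBasis]

lemma entry_eq (Y : Mat n) (p : Fin n × Fin n) :
    (star (e p) * Y).trace = Y p.1 p.2 := by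
  simp [e, Matrix.trace, Matrix.diag, Matrix.mul_apply, Matrix.star_apply,
    Matrix.single, Matrix.of_apply, apply_ite (starRingEnd ℂ), ite_mul,
    ite_and, Finset.sum_ite_eq, Finset.sum_ite_eq']

lemma trace_lm' (f : Mat n →ₗ[ℂ] Mat n) :
    LinearMap.trace ℂ (Mat n) f = ∑ p : Fin n × Fin n, (star (e p) * f (e p)).trace := by
  rw [trace_lm]; exact Finset.sum_congr rfl fun p _ => (entry_eq _ p).symm

section proj
variable {S : Submodule ℂ (Mat n)} {E : Mat n →ₗ[ℂ] Mat n}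
  (hE : IsHSProj S E)
include hE

lemma idem (X : Mat n) : E (E X) = E X := hE.2.1 _ (hE.1 X)

lemma adj (X Y : Mat n) : (star (E X) * Y).trace = (star X * E Y).trace := hE.2.2 X Y

lemma tr_preserv (h1 : (1 : Mat n) ∈ S) (X : Mat n) : (E X).trace = X.trace := by
  have := hE.2.2 1 X
  rw [hE.2.1 1 h1] at this
  simpa using this.symm

/-- projections do not increase the HS norm -/
lemma hsq_proj_le (Y : Mat n) : hsq (E Y) ≤ hsq Y := by
  have horth : (star (E Y) * (Y - E Y)).trace = 0 := by
    have h2 : (star (E Y) * E Y).trace = (star Y * E Y).trace := by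
      rw [adj hE, idem hE]
    rw [mul_sub, Matrix.trace_sub, adj hE Y Y, h2, sub_self]
  have hd : (star Y * Y).trace = (star (E Y) * (E Y)).trace
      + (star (Y - E Y) * (Y - E Y)).trace := by
    have := pyth horth
    rwa [add_sub_cancel] at this
  rw [tr_star_mul_self, tr_star_mul_self, tr_star_mul_self] at hd
  have : hsq Y = hsq (E Y) + hsq (Y - E Y) := by exact_mod_cast hd
  linarith [hsq_nonneg (Y - E Y)]

end proj

/-- orthogonal projection onto `ℂ · 1` -/
def P0 (n : ℕ) : Mat n →ₗ[ℂ] Mat n where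
  toFun X := ((n : ℂ)⁻¹ * X.trace) • 1
  map_add' X Y := by simp [Matrix.trace_add, mul_add, add_smul]
  map_smul' c X := by
    simp only [Matrix.trace_smul, smul_eq_mul, RingHom.id_apply, smul_smul]
    ring_nf

lemma P0_apply (X : Mat n) : P0 n X = ((n : ℂ)⁻¹ * X.trace) • 1 := rfl

lemma P0_trace (hn : 0 < n) (X : Mat n) : (P0 n X).trace = X.trace := by
  have hn' : (n : ℂ) ≠ 0 := Nat.cast_ne_zero.2 hn.ne'
  simp only [P0_apply, Matrix.trace_smul, Matrix.trace_one, smul_eq_mul, Fintype.card_fin]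
  field_simp

lemma tr_star_P0_mul (X V : Mat n) :
    (star (P0 n X) * V).trace = (starRingEnd ℂ) ((n : ℂ)⁻¹ * X.trace) * V.trace := by
  rw [P0_apply, star_smul, smul_mul_assoc, Matrix.trace_smul]
  simp [Matrix.trace_smul]

lemma e_trace (p : Fin n × Fin n) :
    (e p).trace = if p.1 = p.2 then (1 : ℂ) else 0 := by
  rcases p with ⟨i, j⟩
  by_cases h : i = j
  · subst h; simp [e, Matrix.trace_single_eq_same]
  · simp [e, h, Matrix.trace_single_eq_of_ne _ _ _ h]

lemma sum_P0_hsq (hn : 0 < n) :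
    ∑ p : Fin n × Fin n, (star (P0 n (e p)) * (P0 n (e p))).trace = 1 := by
  have hn' : (n : ℂ) ≠ 0 := Nat.cast_ne_zero.2 hn.ne'
  have h1 : ∀ p : Fin n × Fin n, (star (P0 n (e p)) * (P0 n (e p))).trace
      = (starRingEnd ℂ) ((n : ℂ)⁻¹ * (e p).trace) * ((n : ℂ)⁻¹ * (e p).trace) * n := by
    intro p
    rw [tr_star_P0_mul, P0_apply, Matrix.trace_smul, Matrix.trace_one]
    simp [mul_assoc]
  have h2 : ∀ p : Fin n × Fin n, (star (P0 n (e p)) * (P0 n (e p))).trace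
      = if p.1 = p.2 then (n : ℂ)⁻¹ else 0 := by
    intro p
    rw [h1 p, e_trace]
    split
    · simp only [mul_one, map_inv₀, Complex.conj_natCast, _root_.map_mul]
      field_simp
    · simp
  simp only [h2]
  rw [Fintype.sum_prod_type]
  simp only [Finset.sum_ite_eq, Finset.mem_univ, if_true]
  rw [Finset.sum_const, Finset.card_univ, Fintype.card_fin, nsmul_eq_mul,
    mul_inv_cancel₀ hn']

end Stmt15Aux

open Stmt15Aux

/-- `c(𝒜,ℬ) := Tr(E_𝒜 E_ℬ)` is a real number with
`1 ≤ c(𝒜,ℬ) ≤ min(dim 𝒜, dim ℬ)`, and `c(𝒜,ℬ) = 1` iff `𝒜 ⊥ ℬ`. -/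
theorem stmt15 {n : ℕ} (hn : 0 < n) (𝒜 ℬ : StarSubalgebra ℂ (Mat n))
    (EA EB : Mat n →ₗ[ℂ] Mat n)
    (hEA : IsHSProj (Subalgebra.toSubmodule 𝒜.toSubalgebra) EA)
    (hEB : IsHSProj (Subalgebra.toSubmodule ℬ.toSubalgebra) EB) :
    (LinearMap.trace ℂ (Mat n) (EA ∘ₗ EB)).im = 0 ∧
    1 ≤ (LinearMap.trace ℂ (Mat n) (EA ∘ₗ EB)).re ∧
    (LinearMap.trace ℂ (Mat n) (EA ∘ₗ EB)).re ≤
      ((min (Module.finrank ℂ 𝒜) (Module.finrank ℂ ℬ) : ℕ) : ℝ) ∧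
    (LinearMap.trace ℂ (Mat n) (EA ∘ₗ EB) = 1 ↔ QuasiOrth 𝒜 ℬ) := by
  classical
  have hn' : (n : ℂ) ≠ 0 := Nat.cast_ne_zero.2 hn.ne'
  have h1A : (1 : Mat n) ∈ Subalgebra.toSubmodule 𝒜.toSubalgebra :=
    (Subalgebra.mem_toSubmodule _).2 (one_mem _)
  have h1B : (1 : Mat n) ∈ Subalgebra.toSubmodule ℬ.toSubalgebra :=
    (Subalgebra.mem_toSubmodule _).2 (one_mem _)
  have aA := hEA.2.2
  have aB := hEB.2.2
  have iA : EA ∘ₗ EA = EA := LinearMap.ext (idem hEA)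
  have iB : EB ∘ₗ EB = EB := LinearMap.ext (idem hEB)
  -- the main trace identity
  have main : ∀ (E1 E2 : Mat n →ₗ[ℂ] Mat n),
      (∀ X Y, (star (E1 X) * Y).trace = (star X * E1 Y).trace) →
      (∀ X, E1 (E1 X) = E1 X) →
      (∀ X Y, (star (E2 X) * Y).trace = (star X * E2 Y).trace) →
      (∀ X, E2 (E2 X) = E2 X) →
      LinearMap.trace ℂ (Mat n) (E1 ∘ₗ E2)
        = ∑ p : Fin n × Fin n, (star (E2 (E1 (e p))) * (E2 (E1 (e p)))).trace := by
    intro E1 E2 a1 i1 a2 i2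
    have step : LinearMap.trace ℂ (Mat n) (E1 ∘ₗ E2)
        = LinearMap.trace ℂ (Mat n) ((E1 ∘ₗ E2) ∘ₗ E1) := by
      have i1' : E1 ∘ₗ E1 = E1 := LinearMap.ext i1
      conv_lhs => rw [← i1']
      rw [LinearMap.comp_assoc, ← Module.End.mul_eq_comp, ← Module.End.mul_eq_comp,
        LinearMap.trace_mul_comm, Module.End.mul_eq_comp, Module.End.mul_eq_comp]
    rw [step, trace_lm']
    refine Finset.sum_congr rfl fun p _ => ?_
    have h1 : (star (e p) * ((E1 ∘ₗ E2) ∘ₗ E1) (e p)).trace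
        = (star (E1 (e p)) * E2 (E1 (e p))).trace := by
      simp only [LinearMap.comp_apply]
      rw [← a1 (e p) (E2 (E1 (e p)))]
    rw [h1, a2 (E1 (e p)) (E2 (E1 (e p))), i2]
  -- trace of a projection as a sum
  have traceproj : ∀ (E : Mat n →ₗ[ℂ] Mat n),
      (∀ X Y, (star (E X) * Y).trace = (star X * E Y).trace) →
      (∀ X, E (E X) = E X) →
      (∑ p : Fin n × Fin n, (star (E (e p)) * (E (e p))).trace)
        = LinearMap.trace ℂ (Mat n) E := by
    intro E a i
    rw [trace_lm']
    refine Finset.sum_congr rfl fun p _ => ?_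
    rw [a (e p) (E (e p)), i]
  -- real expressions for the trace, both ways
  have hTA : LinearMap.trace ℂ (Mat n) (EA ∘ₗ EB)
      = ((∑ p : Fin n × Fin n, hsq (EB (EA (e p))) : ℝ) : ℂ) := by
    rw [main EA EB aA (idem hEA) aB (idem hEB)]
    push_cast
    exact Finset.sum_congr rfl fun p _ => tr_star_mul_self _
  have hswap : LinearMap.trace ℂ (Mat n) (EA ∘ₗ EB)
      = LinearMap.trace ℂ (Mat n) (EB ∘ₗ EA) := by
    rw [← Module.End.mul_eq_comp, ← Module.End.mul_eq_comp, LinearMap.trace_mul_comm]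
  have hTB : LinearMap.trace ℂ (Mat n) (EA ∘ₗ EB)
      = ((∑ p : Fin n × Fin n, hsq (EA (EB (e p))) : ℝ) : ℂ) := by
    rw [hswap, main EB EA aB (idem hEB) aA (idem hEA)]
    push_cast
    exact Finset.sum_congr rfl fun p _ => tr_star_mul_self _
  -- trace of each projection equals the finrank
  have hprojA : LinearMap.IsProj (Subalgebra.toSubmodule 𝒜.toSubalgebra) EA :=
    ⟨hEA.1, hEA.2.1⟩
  have hprojB : LinearMap.IsProj (Subalgebra.toSubmodule ℬ.toSubalgebra) EB :=
    ⟨hEB.1, hEB.2.1⟩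
  have hrkA : LinearMap.trace ℂ (Mat n) EA = (Module.finrank ℂ 𝒜 : ℂ) := by
    rw [hprojA.trace]
    norm_cast
  have hrkB : LinearMap.trace ℂ (Mat n) EB = (Module.finrank ℂ ℬ : ℂ) := by
    rw [hprojB.trace]
    norm_cast
  have hsumA : (∑ p : Fin n × Fin n, hsq (EA (e p))) = (Module.finrank ℂ 𝒜 : ℝ) := by
    have := (traceproj EA aA (idem hEA)).trans hrkA
    rw [Finset.sum_congr rfl (fun (p : Fin n × Fin n) _ => tr_star_mul_self (EA (e p)))] at this
    exact_mod_cast this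
  have hsumB : (∑ p : Fin n × Fin n, hsq (EB (e p))) = (Module.finrank ℂ ℬ : ℝ) := by
    have := (traceproj EB aB (idem hEB)).trans hrkB
    rw [Finset.sum_congr rfl (fun (p : Fin n × Fin n) _ => tr_star_mul_self (EB (e p)))] at this
    exact_mod_cast this
  -- decomposition T = 1 + r
  set r : ℝ := ∑ p : Fin n × Fin n, hsq (EB (EA (e p)) - P0 n (e p)) with hr
  have hdecomp : LinearMap.trace ℂ (Mat n) (EA ∘ₗ EB) = 1 + (r : ℂ) := by
    rw [main EA EB aA (idem hEA) aB (idem hEB)]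
    have per : ∀ p : Fin n × Fin n, (star (EB (EA (e p))) * (EB (EA (e p)))).trace
        = (star (P0 n (e p)) * (P0 n (e p))).trace
          + ((hsq (EB (EA (e p)) - P0 n (e p)) : ℝ) : ℂ) := by
      intro p
      have hUV : EB (EA (e p)) = P0 n (e p) + (EB (EA (e p)) - P0 n (e p)) :=
        (add_sub_cancel _ _).symm
      have htr0 : (EB (EA (e p)) - P0 n (e p)).trace = 0 := by
        rw [Matrix.trace_sub, tr_preserv hEB h1B, tr_preserv hEA h1A, P0_trace hn, sub_self]
      have horth : (star (P0 n (e p)) * (EB (EA (e p)) - P0 n (e p))).trace = 0 := by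
        rw [tr_star_P0_mul, htr0, mul_zero]
      rw [hUV, pyth horth, tr_star_mul_self (EB (EA (e p)) - P0 n (e p))]
      rw [← hUV]
    rw [Finset.sum_congr rfl (fun p _ => per p), Finset.sum_add_distrib, sum_P0_hsq hn, hr]
    push_cast
    ring
  have hr_nonneg : 0 ≤ r :=
    Finset.sum_nonneg fun p _ => hsq_nonneg _
  refine ⟨by rw [hdecomp]; simp, ?_, ?_, ?_⟩
  · rw [hdecomp]; simp [hr_nonneg]
  · -- upper bound
    have hreA : (LinearMap.trace ℂ (Mat n) (EA ∘ₗ EB)).re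
        = ∑ p : Fin n × Fin n, hsq (EB (EA (e p))) := by rw [hTA, Complex.ofReal_re]
    have hboundA : (LinearMap.trace ℂ (Mat n) (EA ∘ₗ EB)).re ≤ (Module.finrank ℂ 𝒜 : ℝ) := by
      rw [hreA, ← hsumA]
      exact Finset.sum_le_sum fun p _ => hsq_proj_le hEB (EA (e p))
    have hboundB : (LinearMap.trace ℂ (Mat n) (EA ∘ₗ EB)).re ≤ (Module.finrank ℂ ℬ : ℝ) := by
      rw [hTB, Complex.ofReal_re, ← hsumB]
      exact Finset.sum_le_sum fun p _ => hsq_proj_le hEA (EB (e p))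
    rw [Nat.cast_min]
    exact le_min hboundA hboundB
  · -- the equality case
    constructor
    · intro hT
      have hr0 : r = 0 := by
        rw [hdecomp] at hT
        have : (r : ℂ) = 0 := by linear_combination hT
        exact_mod_cast this
      -- conclude EB ∘ EA = P0 on basis elements
      have hbasis : ∀ p : Fin n × Fin n, EB (EA (e p)) = P0 n (e p) := by
        intro p
        have h0 : hsq (EB (EA (e p)) - P0 n (e p)) = 0 := by
          have := (Finset.sum_eq_zero_iff_of_nonneg
            (fun (p : Fin n × Fin n) _ => hsq_nonneg (EB (EA (e p)) - P0 n (e p)))).1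
            hr0 p (Finset.mem_univ p)
          exact this
        have := hsq_eq_zero h0
        rw [sub_eq_zero] at this
        exact this
      have hcomp : ∀ X : Mat n, EB (EA X) = P0 n X := by
        intro X
        have hX : X = ∑ p : Fin n × Fin n, X p.1 p.2 • e p := by
          rw [Fintype.sum_prod_type]
          conv_lhs => rw [Matrix.matrix_eq_sum_single X]
          refine Finset.sum_congr rfl fun i _ => Finset.sum_congr rfl fun j _ => ?_
          show Matrix.single i j (X i j) = X i j • Matrix.single i j 1
          rw [smul_single, smul_eq_mul, mul_one]
        calc EB (EA X) = (EB ∘ₗ EA) X := rfl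
          _ = (EB ∘ₗ EA) (∑ p : Fin n × Fin n, X p.1 p.2 • e p) := by rw [← hX]
          _ = ∑ p : Fin n × Fin n, X p.1 p.2 • (EB (EA (e p))) := by
              rw [map_sum]; simp only [LinearMap.map_smul, LinearMap.comp_apply]
          _ = ∑ p : Fin n × Fin n, X p.1 p.2 • (P0 n (e p)) := by
              exact Finset.sum_congr rfl fun p _ => by rw [hbasis p]
          _ = P0 n (∑ p : Fin n × Fin n, X p.1 p.2 • e p) := by
              rw [map_sum]; simp only [LinearMap.map_smul]
          _ = P0 n X := by rw [← hX]
      intro A hA B hB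
      have hA' : EA (star A) = star A :=
        hEA.2.1 _ ((Subalgebra.mem_toSubmodule _).2 (StarSubalgebra.mem_toSubalgebra.2 (star_mem hA)))
      have hB' : EB B = B := hEB.2.1 _ ((Subalgebra.mem_toSubmodule _).2 (StarSubalgebra.mem_toSubalgebra.2 hB))
      have key : (A * B).trace = (star (P0 n (star A)) * B).trace := by
        calc (A * B).trace = (star (star A) * B).trace := by rw [star_star]
          _ = (star (star A) * EB B).trace := by rw [hB']
          _ = (star (EB (star A)) * B).trace := (aB (star A) B).symm
          _ = (star (EB (EA (star A))) * B).trace := by rw [hA']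
          _ = (star (P0 n (star A)) * B).trace := by rw [hcomp]
      have hP : star (P0 n (star A)) = ((n : ℂ)⁻¹ * A.trace) • (1 : Mat n) := by
        rw [P0_apply, star_smul, star_one]
        congr 1
        have : (star A).trace = star A.trace := by
          rw [Matrix.star_eq_conjTranspose, Matrix.trace_conjTranspose]
        rw [this]
        simp [Complex.conj_natCast, _root_.map_mul, map_inv₀]
      rw [key, hP, smul_mul_assoc, Matrix.trace_smul, smul_eq_mul]
      field_simp
      rw [one_mul]
    · intro hq
      -- quasi-orthogonality forces r = 0
      have hterm : ∀ p : Fin n × Fin n, hsq (EB (EA (e p)) - P0 n (e p)) = 0 := by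
        intro p
        set A := EA (e p) - P0 n (e p) with hAdef
        have hRA : EB (EA (e p)) - P0 n (e p) = EB A := by
          rw [hAdef, map_sub, hEB.2.1 (P0 n (e p))
            (Submodule.smul_mem _ _ h1B)]
        have hAmem : A ∈ 𝒜 := by
          have h1 : EA (e p) ∈ 𝒜 :=
            StarSubalgebra.mem_toSubalgebra.1 ((Subalgebra.mem_toSubmodule _).1 (hEA.1 (e p)))
          have h2 : P0 n (e p) ∈ 𝒜 := by
            rw [P0_apply]
            exact SMulMemClass.smul_mem _ (one_mem _)
          exact sub_mem h1 h2
        have hBmem : EB A ∈ ℬ := StarSubalgebra.mem_toSubalgebra.1 ((Subalgebra.mem_toSubmodule _).1 (hEB.1 A))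
        have htrA : A.trace = 0 := by
          rw [hAdef, Matrix.trace_sub, tr_preserv hEA h1A, P0_trace hn, sub_self]
        have hval : (star A * EB A).trace = 0 := by
          have := hq (star A) (star_mem hAmem) (EB A) hBmem
          have htrsA : (star A).trace = 0 := by
            rw [Matrix.star_eq_conjTranspose, Matrix.trace_conjTranspose, htrA, star_zero]
          rw [htrsA, zero_mul] at this
          exact (mul_eq_zero.1 this).resolve_left hn'
        have hcast : ((hsq (EB A) : ℝ) : ℂ) = 0 := by
          rw [← tr_star_mul_self, aB A (EB A), idem hEB, hval]
        rw [hRA]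
        exact_mod_cast hcast
      have hr0 : r = 0 := by
        rw [hr]
        exact Finset.sum_eq_zero fun p _ => hterm p
      rw [hdecomp, hr0]
      simp
end
end

section
/- If 𝒜 ⊆ M_n(ℂ) is a homogeneously balanced unital *-subalgebra and A_1,…,A_N is a Hilbert–Schmidt orthonormal basis of 𝒜, then the trace-preserving conditional expectation onto the commutant 𝒜' is given by E_{𝒜'}(X) = (n/N) Σ_{j=1}^N A_j X A_j* for all X ∈ M_n(ℂ). -/
open Matrix BigOperators

noncomputable section

/-- A unital *-subalgebra `𝒜 ⊆ M_n(ℂ)` is homogeneously balanced if, up to a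
unitary conjugation and a reindexing, it is `⊕ₖ (M_{p k}(ℂ) ⊗ 1_{q k})` with the
ratio `p k / q k` independent of `k`. -/
def IsHomBalanced {n : ℕ} (𝒜 : StarSubalgebra ℂ (Mat n)) : Prop :=
  ∃ (ι : Type) (_ : Fintype ι) (_ : DecidableEq ι) (p q : ι → ℕ)
    (e : (Σ k : ι, Fin (p k) × Fin (q k)) ≃ Fin n) (U : Mat n),
      U * star U = 1 ∧ star U * U = 1 ∧
      (∀ k, 0 < p k ∧ 0 < q k) ∧
      (∀ k l, p k * q l = p l * q k) ∧
      (∀ X : Mat n, X ∈ 𝒜 ↔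
        ∃ A : ∀ k, Matrix (Fin (p k)) (Fin (p k)) ℂ,
          X = U * (Matrix.reindex e e (Matrix.blockDiagonal'
            (fun k => Matrix.kroneckerMap (· * ·) (A k)
              (1 : Matrix (Fin (q k)) (Fin (q k)) ℂ)))) * star U)

lemma expandON {n : ℕ} {ι : Type} [Fintype ι] [DecidableEq ι] (B : ι → Mat n)
    (hON : ∀ i j, (star (B i) * B j).trace = if i = j then 1 else 0)
    {X : Mat n} (hX : X ∈ Submodule.span ℂ (Set.range B)) :
    X = ∑ j, (star (B j) * X).trace • B j := by
  rw [Finsupp.mem_span_range_iff_exists_finsupp] at hX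
  obtain ⟨c, hc⟩ := hX
  have hc' : X = ∑ j, c j • B j := by
    rw [← hc, Finsupp.sum_fintype]; intro; simp
  have key : ∀ j, (star (B j) * X).trace = c j := by
    intro j
    rw [hc', Finset.mul_sum, trace_sum]
    have : ∀ i, (star (B j) * (c i • B i)).trace = c i * (if j = i then 1 else 0) := by
      intro i; rw [mul_smul_comm, trace_smul, hON]; simp
    simp only [this, mul_ite, mul_one, mul_zero]
    simp
  conv_lhs => rw [hc']
  exact Finset.sum_congr rfl fun j _ => by rw [key]

lemma conj_trace_star_mul {n : ℕ} (M N : Mat n) :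
    (star M * N).trace = star ((star N * M).trace) := by
  rw [← trace_conjTranspose]
  congr 1
  simp [Matrix.star_eq_conjTranspose, conjTranspose_mul]

lemma basisIndep {n : ℕ} {ι κ : Type} [Fintype ι] [DecidableEq ι] [Fintype κ] [DecidableEq κ]
    (B : ι → Mat n) (C : κ → Mat n)
    (hONB : ∀ i j, (star (B i) * B j).trace = if i = j then 1 else 0)
    (hONC : ∀ i j, (star (C i) * C j).trace = if i = j then 1 else 0)
    (hCB : ∀ i, C i ∈ Submodule.span ℂ (Set.range B))
    (hBC : ∀ j, B j ∈ Submodule.span ℂ (Set.range C)) (X : Mat n) :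
    ∑ i, C i * X * star (C i) = ∑ j, B j * X * star (B j) := by
  set t : κ → ι → ℂ := fun i j => (star (B j) * C i).trace with ht
  have hC : ∀ i, C i = ∑ j, t i j • B j := fun i => expandON B hONB (hCB i)
  have hB : ∀ j, B j = ∑ i, star (t i j) • C i := by
    intro j
    rw [expandON C hONC (hBC j)]
    exact Finset.sum_congr rfl fun i _ => by rw [conj_trace_star_mul]
  have orth2 : ∀ j l, ∑ i, t i j * star (t i l) = if j = l then 1 else 0 := by
    intro j l
    have e1 : ∀ x, (star (C x) * B l).trace = star (t x l) := fun x => conj_trace_star_mul _ _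
    have := hONB j l
    conv at this => lhs; rw [hB j]
    rw [star_sum] at this
    simp only [star_smul, star_star, Finset.sum_mul, smul_mul_assoc, trace_sum,
      trace_smul, smul_eq_mul, e1] at this
    exact this
  calc ∑ i, C i * X * star (C i)
      = ∑ i, ∑ j, ∑ l, (t i j * star (t i l)) • (B j * X * star (B l)) := by
        refine Finset.sum_congr rfl fun i _ => ?_
        conv_lhs => rw [hC i]
        rw [star_sum]
        simp only [star_smul, Finset.sum_mul, Finset.mul_sum, smul_mul_assoc, mul_smul_comm,
          smul_smul, Finset.smul_sum]
        rw [Finset.sum_comm]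
        exact Finset.sum_congr rfl fun j _ => Finset.sum_congr rfl fun l _ => by
          rw [mul_comm (star (t i l)) (t i j)]
    _ = ∑ j, ∑ l, (∑ i, t i j * star (t i l)) • (B j * X * star (B l)) := by
        rw [Finset.sum_comm]
        refine Finset.sum_congr rfl fun j _ => ?_
        rw [Finset.sum_comm]
        refine Finset.sum_congr rfl fun l _ => ?_
        rw [Finset.sum_smul]
    _ = ∑ j, B j * X * star (B j) := by
        refine Finset.sum_congr rfl fun j _ => ?_
        rw [Finset.sum_eq_single j]
        · rw [orth2]; simp
        · intro l _ hl; rw [orth2]; simp [Ne.symm hl]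
        · simp

lemma commPhi {n N : ℕ} (𝒜 : StarSubalgebra ℂ (Mat n)) (A : Fin N → Mat n)
    (hA : ∀ j, A j ∈ 𝒜)
    (hON : ∀ i j, (star (A i) * A j).trace = if i = j then 1 else 0)
    (hsp : Submodule.span ℂ (Set.range A) = Subalgebra.toSubmodule 𝒜.toSubalgebra)
    {B : Mat n} (hB : B ∈ 𝒜) (X : Mat n) :
    B * (∑ j, A j * X * star (A j)) = (∑ j, A j * X * star (A j)) * B := by
  have hmem : ∀ {M : Mat n}, M ∈ 𝒜 → M ∈ Submodule.span ℂ (Set.range A) := by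
    intro M hM; rw [hsp]; exact hM
  set c : Fin N → Fin N → ℂ := fun j k => (star (A k) * (B * A j)).trace with hc
  set d : Fin N → Fin N → ℂ := fun j k => (star (A k) * (star B * A j)).trace with hd
  have hBA : ∀ j, B * A j = ∑ k, c j k • A k :=
    fun j => expandON A hON (hmem (mul_mem hB (hA j)))
  have hBA' : ∀ j, star B * A j = ∑ k, d j k • A k :=
    fun j => expandON A hON (hmem (mul_mem (star_mem hB) (hA j)))
  have hAB : ∀ j, star (A j) * B = ∑ k, star (d j k) • star (A k) := by
    intro j
    have := congrArg star (hBA' j)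
    rw [star_sum] at this
    simp only [star_smul, Matrix.star_mul, star_star] at this
    exact this
  have hdc : ∀ j k, star (d j k) = c k j := by
    intro j k
    rw [hd, hc]
    rw [← conj_trace_star_mul]
    congr 1
    rw [Matrix.star_mul, star_star, Matrix.mul_assoc]
  calc B * (∑ j, A j * X * star (A j))
      = ∑ j, ∑ k, c j k • (A k * X * star (A j)) := by
        rw [Finset.mul_sum]
        refine Finset.sum_congr rfl fun j _ => ?_
        rw [show B * (A j * X * star (A j)) = (B * A j) * X * star (A j) by simp only [Matrix.mul_assoc],
          hBA j]
        simp only [Finset.sum_mul, smul_mul_assoc]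
    _ = ∑ j, ∑ k, c k j • (A j * X * star (A k)) := Finset.sum_comm
    _ = (∑ j, A j * X * star (A j)) * B := by
        rw [Finset.sum_mul]
        refine Finset.sum_congr rfl fun j _ => ?_
        rw [show A j * X * star (A j) * B = A j * X * (star (A j) * B) by simp only [Matrix.mul_assoc], hAB j]
        simp only [Finset.mul_sum, mul_smul_comm, hdc]

open Kronecker

section explicitSec

variable {n : ℕ} {ι : Type} [Fintype ι] [DecidableEq ι] {p q : ι → ℕ}

omit [DecidableEq ι] in
lemma trace_reindex' (e : (Σ k : ι, Fin (p k) × Fin (q k)) ≃ Fin n)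
    (M : Matrix (Σ k : ι, Fin (p k) × Fin (q k)) (Σ k : ι, Fin (p k) × Fin (q k)) ℂ) :
    (Matrix.reindex e e M).trace = M.trace := by
  simp only [Matrix.trace, Matrix.diag, Matrix.reindex_apply, Matrix.submatrix_apply]
  exact Equiv.sum_comp e.symm (fun x => M x x)

lemma kron_one_conjTranspose {a b : ℕ} (A : Matrix (Fin a) (Fin a) ℂ) :
    (A ⊗ₖ (1 : Matrix (Fin b) (Fin b) ℂ))ᴴ = Aᴴ ⊗ₖ (1 : Matrix (Fin b) (Fin b) ℂ) := by
  ext ⟨i, j⟩ ⟨k, l⟩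
  by_cases h : j = l
  · subst h
    simp [Matrix.conjTranspose_apply, Matrix.one_apply]
  · simp only [Matrix.conjTranspose_apply, Matrix.kroneckerMap_apply, Matrix.one_apply,
      if_neg h, mul_zero, star_zero, if_neg (fun hh : j = l => h hh)]
    rw [if_neg (fun hh : l = j => h hh.symm), mul_zero, star_zero]

lemma kron_one_mul {a b : ℕ} (A B : Matrix (Fin a) (Fin a) ℂ) :
    (A * B) ⊗ₖ (1 : Matrix (Fin b) (Fin b) ℂ)
      = (A ⊗ₖ (1 : Matrix (Fin b) (Fin b) ℂ)) * (B ⊗ₖ (1 : Matrix (Fin b) (Fin b) ℂ)) := by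
  have := Matrix.mul_kronecker_mul A B (1 : Matrix (Fin b) (Fin b) ℂ)
    (1 : Matrix (Fin b) (Fin b) ℂ)
  rwa [Matrix.one_mul] at this

/-- The block-embedding map as a linear map. -/
def GmapL (e : (Σ k : ι, Fin (p k) × Fin (q k)) ≃ Fin n) (U : Mat n) :
    (∀ k, Matrix (Fin (p k)) (Fin (p k)) ℂ) →ₗ[ℂ] Mat n where
  toFun A := U * (Matrix.reindex e e (Matrix.blockDiagonal'
      (fun k => Matrix.kroneckerMap (· * ·) (A k)
        (1 : Matrix (Fin (q k)) (Fin (q k)) ℂ)))) * star U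
  map_add' A A' := by
    have h : (fun k => Matrix.kroneckerMap (· * ·) (A k + A' k)
          (1 : Matrix (Fin (q k)) (Fin (q k)) ℂ))
        = (fun k => Matrix.kroneckerMap (· * ·) (A k) (1 : Matrix (Fin (q k)) (Fin (q k)) ℂ))
          + (fun k => Matrix.kroneckerMap (· * ·) (A' k)
              (1 : Matrix (Fin (q k)) (Fin (q k)) ℂ)) := by
      funext k
      exact Matrix.add_kronecker _ _ _
    simp only [Pi.add_apply]
    rw [h]
    simp only [Matrix.blockDiagonal'_add, Matrix.reindex_apply, Matrix.submatrix_add,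
      Pi.add_apply, Matrix.mul_add, Matrix.add_mul]
  map_smul' c A := by
    have h : (fun k => Matrix.kroneckerMap (· * ·) (c • A k)
          (1 : Matrix (Fin (q k)) (Fin (q k)) ℂ))
        = c • (fun k => Matrix.kroneckerMap (· * ·) (A k)
            (1 : Matrix (Fin (q k)) (Fin (q k)) ℂ)) := by
      funext k
      simp [Matrix.smul_kronecker]
    simp only [Pi.smul_apply]
    rw [h]
    simp only [Matrix.blockDiagonal'_smul, Matrix.reindex_apply, Matrix.submatrix_smul,
      Pi.smul_apply, Matrix.mul_smul, Matrix.smul_mul, RingHom.id_apply]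

variable (e : (Σ k : ι, Fin (p k) × Fin (q k)) ≃ Fin n) (U : Mat n)

lemma GmapL_mul (hU2 : star U * U = 1) (A A' : ∀ k, Matrix (Fin (p k)) (Fin (p k)) ℂ) :
    GmapL e U A * GmapL e U A' = GmapL e U (fun k => A k * A' k) := by
  simp only [GmapL, LinearMap.coe_mk, AddHom.coe_mk]
  rw [show ∀ (X Y : Mat n), U * X * star U * (U * Y * star U) = U * (X * (star U * U) * Y) * star U
    by intro X Y; simp only [Matrix.mul_assoc], hU2, Matrix.mul_one]
  congr 2
  simp only [kron_one_mul, Matrix.blockDiagonal'_mul, Matrix.reindex_apply,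
    Matrix.submatrix_mul_equiv]

lemma GmapL_star (A : ∀ k, Matrix (Fin (p k)) (Fin (p k)) ℂ) :
    star (GmapL e U A) = GmapL e U (fun k => star (A k)) := by
  simp only [GmapL, LinearMap.coe_mk, AddHom.coe_mk, Matrix.star_mul, star_star,
    Matrix.mul_assoc]
  congr 2
  rw [Matrix.star_eq_conjTranspose, Matrix.reindex_apply, Matrix.reindex_apply,
    Matrix.conjTranspose_submatrix, Matrix.blockDiagonal'_conjTranspose]
  have h : (fun k => (Matrix.kroneckerMap (· * ·) (A k)
        (1 : Matrix (Fin (q k)) (Fin (q k)) ℂ))ᴴ)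
      = fun k => Matrix.kroneckerMap (· * ·) ((A k)ᴴ)
          (1 : Matrix (Fin (q k)) (Fin (q k)) ℂ) := by
    funext k
    exact kron_one_conjTranspose _
  rw [h]
  rfl

lemma GmapL_one (hU1 : U * star U = 1) :
    GmapL e U (fun k => (1 : Matrix (Fin (p k)) (Fin (p k)) ℂ)) = 1 := by
  simp only [GmapL, LinearMap.coe_mk, AddHom.coe_mk, Matrix.one_kronecker_one]
  have h : (fun k => (1 : Matrix (Fin (p k) × Fin (q k)) (Fin (p k) × Fin (q k)) ℂ))
      = (1 : ∀ k, Matrix (Fin (p k) × Fin (q k)) (Fin (p k) × Fin (q k)) ℂ) := rfl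
  rw [h, Matrix.blockDiagonal'_one, Matrix.reindex_apply, Matrix.submatrix_one_equiv,
    Matrix.mul_one, hU1]

lemma GmapL_trace (hU2 : star U * U = 1) (A : ∀ k, Matrix (Fin (p k)) (Fin (p k)) ℂ) :
    (GmapL e U A).trace = ∑ k, (A k).trace * (q k : ℂ) := by
  simp only [GmapL, LinearMap.coe_mk, AddHom.coe_mk]
  rw [Matrix.trace_mul_cycle, hU2, Matrix.one_mul, trace_reindex',
    Matrix.trace_blockDiagonal']
  refine Finset.sum_congr rfl fun k _ => ?_
  rw [Matrix.trace_kronecker, Matrix.trace_one]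
  simp

lemma stdBasis_conjT {P : ℕ} (a b : Fin P) :
    (Matrix.single a b (1 : ℂ))ᴴ = Matrix.single b a 1 := by
  ext i j
  simp only [Matrix.conjTranspose_apply, Matrix.single, Matrix.of_apply]
  by_cases h1 : b = i <;> by_cases h2 : a = j <;> simp [h1, h2]

lemma trace_stdBasis {P : ℕ} (b b' : Fin P) :
    (Matrix.single b b' (1 : ℂ)).trace = if b = b' then 1 else 0 := by
  simp only [Matrix.trace, Matrix.diag, Matrix.single, Matrix.of_apply]
  by_cases h : b = b'
  · subst h
    simp
  · rw [if_neg h]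
    refine Finset.sum_eq_zero fun x _ => if_neg ?_
    rintro ⟨rfl, rfl⟩
    exact h rfl

lemma trace_star_stdBasis {P : ℕ} (a b a' b' : Fin P) :
    ((Matrix.single a b (1 : ℂ))ᴴ * Matrix.single a' b' 1).trace
      = if a = a' ∧ b = b' then 1 else 0 := by
  rw [stdBasis_conjT]
  by_cases h : a = a'
  · subst h
    rw [Matrix.single_mul_single_same, one_mul, trace_stdBasis]
    simp
  · rw [Matrix.single_mul_single_of_ne (h := h), Matrix.trace_zero, if_neg (fun hh => h hh.1)]

lemma sum_stdBasis_diag {P : ℕ} : ∑ a : Fin P, Matrix.single a a (1 : ℂ) = 1 := by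
  ext i j
  by_cases h : i = j
  · subst h
    simp [Matrix.sum_apply, Matrix.single]
  · simp [Matrix.sum_apply, Matrix.single, Matrix.one_apply, h,
      fun a => show ¬(a = i ∧ a = j) from fun ⟨h1, h2⟩ => h (h1 ▸ h2 ▸ rfl)]

lemma explicitBasis (hU1 : U * star U = 1) (hU2 : star U * U = 1)
    (hpq : ∀ k, 0 < p k ∧ 0 < q k) (hbal : ∀ k l, p k * q l = p l * q k) :
    ∃ (B : (Σ k : ι, Fin (p k) × Fin (p k)) → Mat n) (c : ℂ),
      (∀ i j, (star (B i) * B j).trace = if i = j then 1 else 0) ∧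
      (∀ x, ∃ A : ∀ k, Matrix (Fin (p k)) (Fin (p k)) ℂ,
        B x = U * (Matrix.reindex e e (Matrix.blockDiagonal'
          (fun k => Matrix.kroneckerMap (· * ·) (A k)
            (1 : Matrix (Fin (q k)) (Fin (q k)) ℂ)))) * star U) ∧
      (∀ A : ∀ k, Matrix (Fin (p k)) (Fin (p k)) ℂ,
        (U * (Matrix.reindex e e (Matrix.blockDiagonal'
          (fun k => Matrix.kroneckerMap (· * ·) (A k)
            (1 : Matrix (Fin (q k)) (Fin (q k)) ℂ)))) * star U)
          ∈ Submodule.span ℂ (Set.range B)) ∧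
      (∑ x, B x * star (B x) = c • 1) ∧
      (0 < n → c ≠ 0) := by
  classical
  set r : ι → ℝ := fun k => (Real.sqrt (q k))⁻¹ with hr
  have hrpos : ∀ k, 0 < r k := fun k =>
    inv_pos.mpr (Real.sqrt_pos.mpr (by exact_mod_cast (hpq k).2))
  have hrq : ∀ k, (r k : ℝ) * r k * q k = 1 := by
    intro k
    have hq : (0 : ℝ) < q k := by exact_mod_cast (hpq k).2
    simp only [hr]
    rw [← mul_inv, Real.mul_self_sqrt hq.le]
    exact inv_mul_cancel₀ hq.ne'
  set B : (Σ k : ι, Fin (p k) × Fin (p k)) → Mat n := fun x =>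
    GmapL e U (Pi.single x.1 (((r x.1 : ℂ)) • Matrix.single x.2.1 x.2.2 1)) with hB
  have hON : ∀ i j, (star (B i) * B j).trace = if i = j then 1 else 0 := by
    rintro ⟨k, a, b⟩ ⟨k', a', b'⟩
    simp only [hB]
    rw [GmapL_star, GmapL_mul e U hU2, GmapL_trace e U hU2]
    by_cases hkk : k = k'
    · subst hkk
      rw [Finset.sum_eq_single k]
      · rw [Pi.single_eq_same, Pi.single_eq_same, star_smul, smul_mul_assoc, mul_smul_comm,
          smul_smul, Matrix.trace_smul, Matrix.star_eq_conjTranspose, trace_star_stdBasis,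
          Complex.star_def, Complex.conj_ofReal]
        have harith : ((r k : ℂ) * (r k : ℂ)) • ((if a = a' ∧ b = b' then 1 else 0) : ℂ)
              * (q k : ℂ) = if a = a' ∧ b = b' then 1 else 0 := by
          have h1 : ((r k : ℂ) * (r k : ℂ)) * (q k : ℂ) = 1 := by
            exact_mod_cast congrArg (fun x : ℝ => (x : ℂ)) (hrq k)
          split_ifs
          · rw [smul_eq_mul, mul_one, h1]
          · rw [smul_eq_mul, mul_zero, zero_mul]
        rw [harith]
        refine if_congr ?_ rfl rfl
        constructor
        · rintro ⟨rfl, rfl⟩; rfl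
        · intro h
          have h2 := (Sigma.mk.inj_iff.mp h).2
          rw [heq_eq_eq, Prod.mk.injEq] at h2
          exact h2
      · intro l _ hl
        rw [Pi.single_eq_of_ne hl, star_zero, Matrix.zero_mul, Matrix.trace_zero, zero_mul]
      · simp
    · rw [if_neg (fun h => hkk (congrArg Sigma.fst h))]
      apply Finset.sum_eq_zero
      intro l _
      by_cases hlk : l = k
      · subst hlk
        rw [Pi.single_eq_of_ne (fun h : l = k' => hkk h), Matrix.mul_zero, Matrix.trace_zero,
          zero_mul]
      · rw [Pi.single_eq_of_ne hlk, star_zero, Matrix.zero_mul, Matrix.trace_zero, zero_mul]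
  -- membership form
  have hmemform : ∀ x, ∃ A : ∀ k, Matrix (Fin (p k)) (Fin (p k)) ℂ,
      B x = U * (Matrix.reindex e e (Matrix.blockDiagonal'
        (fun k => Matrix.kroneckerMap (· * ·) (A k)
          (1 : Matrix (Fin (q k)) (Fin (q k)) ℂ)))) * star U := by
    intro x
    exact ⟨_, rfl⟩
  -- span
  have hspanB : ∀ A : ∀ k, Matrix (Fin (p k)) (Fin (p k)) ℂ,
      (U * (Matrix.reindex e e (Matrix.blockDiagonal'
        (fun k => Matrix.kroneckerMap (· * ·) (A k)
          (1 : Matrix (Fin (q k)) (Fin (q k)) ℂ)))) * star U)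
        ∈ Submodule.span ℂ (Set.range B) := by
    intro A
    have hGA : (U * (Matrix.reindex e e (Matrix.blockDiagonal'
        (fun k => Matrix.kroneckerMap (· * ·) (A k)
          (1 : Matrix (Fin (q k)) (Fin (q k)) ℂ)))) * star U) = GmapL e U A := rfl
    rw [hGA]
    have hA : A = ∑ k, Pi.single k (A k) := (Finset.univ_sum_single A).symm
    rw [hA, map_sum]
    refine Submodule.sum_mem _ fun k _ => ?_
    have key : ∀ (a b : Fin (p k)) (z : ℂ),
        (z * (r k : ℂ)⁻¹) • ((r k : ℂ) • (Matrix.single a b (1 : ℂ)))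
          = Matrix.single a b z := by
      intro a b z
      rw [smul_smul, mul_assoc, inv_mul_cancel₀
        (Complex.ofReal_ne_zero.mpr (hrpos k).ne'), mul_one,
        Matrix.smul_single, smul_eq_mul, mul_one]
    have hAk : Pi.single k (A k)
        = ∑ a, ∑ b, (A k a b * (r k : ℂ)⁻¹) •
            Pi.single (M := fun k => Matrix (Fin (p k)) (Fin (p k)) ℂ) k
              ((r k : ℂ) • (Matrix.single a b (1 : ℂ))) := by
      have h2 : ∀ M : Matrix (Fin (p k)) (Fin (p k)) ℂ,
          Pi.single (M := fun k => Matrix (Fin (p k)) (Fin (p k)) ℂ) k M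
            = (LinearMap.single ℂ (fun k => Matrix (Fin (p k)) (Fin (p k)) ℂ) k) M :=
        fun _ => rfl
      conv_lhs => rw [Matrix.matrix_eq_sum_single (A k)]
      rw [h2, map_sum]
      refine Finset.sum_congr rfl fun a _ => ?_
      rw [map_sum]
      refine Finset.sum_congr rfl fun b _ => ?_
      rw [← key a b (A k a b), _root_.map_smul]
      rfl
    rw [hAk, map_sum]
    refine Submodule.sum_mem _ fun a _ => ?_
    rw [map_sum]
    refine Submodule.sum_mem _ fun b _ => ?_
    rw [_root_.map_smul]
    exact Submodule.smul_mem _ _ (Submodule.subset_span ⟨⟨k, a, b⟩, rfl⟩)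
  by_cases hι : Nonempty ι
  · obtain ⟨k₀⟩ := hι
    have hq0 : ∀ k, (q k : ℂ) ≠ 0 := fun k => Nat.cast_ne_zero.mpr (hpq k).2.ne'
    have hrr : ∀ k, (r k : ℂ) * (r k : ℂ) = ((q k : ℂ))⁻¹ := by
      intro k
      have h1 : ((r k : ℂ) * (r k : ℂ)) * (q k : ℂ) = 1 := by
        exact_mod_cast congrArg (fun x : ℝ => (x : ℂ)) (hrq k)
      exact eq_inv_of_mul_eq_one_left h1
    have hcc : ∀ l, (p l : ℂ) * ((r l : ℂ) * (r l : ℂ))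
        = (p k₀ : ℂ) * ((r k₀ : ℂ) * (r k₀ : ℂ)) := by
      intro l
      rw [hrr, hrr, ← div_eq_mul_inv, ← div_eq_mul_inv, div_eq_div_iff (hq0 l) (hq0 k₀)]
      exact_mod_cast hbal l k₀
    refine ⟨B, (p k₀ : ℂ) * ((r k₀ : ℂ) * (r k₀ : ℂ)), hON, hmemform, hspanB, ?_, ?_⟩
    · have hterm : ∀ x : (Σ k : ι, Fin (p k) × Fin (p k)),
          B x * star (B x) = GmapL e U (fun l =>
            Pi.single x.1 ((r x.1 : ℂ) • Matrix.single x.2.1 x.2.2 1) l *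
            star (Pi.single x.1 ((r x.1 : ℂ) • Matrix.single x.2.1 x.2.2 1) l)) := by
        intro x
        simp only [hB]
        rw [GmapL_star, GmapL_mul e U hU2]
      rw [Finset.sum_congr rfl (fun x _ => hterm x), ← map_sum]
      have hfun : (∑ x : (Σ k : ι, Fin (p k) × Fin (p k)), (fun l =>
            Pi.single x.1 ((r x.1 : ℂ) • Matrix.single x.2.1 x.2.2 1) l *
            star (Pi.single x.1 ((r x.1 : ℂ) • Matrix.single x.2.1 x.2.2 1) l)))
          = fun l => ((p k₀ : ℂ) * ((r k₀ : ℂ) * (r k₀ : ℂ))) •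
              (1 : Matrix (Fin (p l)) (Fin (p l)) ℂ) := by
        funext l
        rw [Finset.sum_apply, ← Finset.univ_sigma_univ, Finset.sum_sigma]
        rw [Finset.sum_eq_single l]
        · rw [Fintype.sum_prod_type]
          have hab : ∀ (a b : Fin (p l)),
              Pi.single (M := fun k => Matrix (Fin (p k)) (Fin (p k)) ℂ) l
                  ((r l : ℂ) • Matrix.single a b 1) l *
                star (Pi.single (M := fun k => Matrix (Fin (p k)) (Fin (p k)) ℂ) l
                  ((r l : ℂ) • Matrix.single a b 1) l)
              = ((r l : ℂ) * (r l : ℂ)) • Matrix.single a a 1 := by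
            intro a b
            rw [Pi.single_eq_same, star_smul, Complex.star_def, Complex.conj_ofReal,
              smul_mul_assoc, mul_smul_comm, smul_smul, Matrix.star_eq_conjTranspose,
              stdBasis_conjT, Matrix.single_mul_single_same, one_mul]
          rw [Finset.sum_congr rfl (fun a _ => Finset.sum_congr rfl (fun b _ => hab a b))]
          rw [Finset.sum_congr rfl (fun a (_ : a ∈ Finset.univ) => Finset.sum_const
            (((r l : ℂ) * (r l : ℂ)) • Matrix.single a a 1))]
          simp only [Finset.card_univ, Fintype.card_fin]
          rw [Finset.sum_congr rfl (fun a (_ : a ∈ Finset.univ) =>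
            (Nat.cast_smul_eq_nsmul ℂ (p l)
              (((r l : ℂ) * (r l : ℂ)) • Matrix.single a a 1)).symm)]
          rw [Finset.sum_congr rfl (fun a (_ : a ∈ Finset.univ) =>
            smul_smul ((p l : ℕ) : ℂ) ((r l : ℂ) * (r l : ℂ)) (Matrix.single a a 1))]
          rw [← Finset.smul_sum, sum_stdBasis_diag, hcc l]
        · intro k _ hkl
          apply Finset.sum_eq_zero
          intro ab _
          rw [Pi.single_eq_of_ne (fun h : l = k => hkl h.symm), Matrix.zero_mul]
        · simp
      rw [hfun]
      have hsm : (fun l => ((p k₀ : ℂ) * ((r k₀ : ℂ) * (r k₀ : ℂ))) •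
              (1 : Matrix (Fin (p l)) (Fin (p l)) ℂ))
          = ((p k₀ : ℂ) * ((r k₀ : ℂ) * (r k₀ : ℂ))) •
              (fun l => (1 : Matrix (Fin (p l)) (Fin (p l)) ℂ)) := rfl
      rw [hsm, _root_.map_smul, GmapL_one e U hU1]
    · intro _
      have h1 : (p k₀ : ℂ) ≠ 0 := Nat.cast_ne_zero.mpr (hpq k₀).1.ne'
      have h2 : ((r k₀ : ℝ) : ℂ) ≠ 0 := Complex.ofReal_ne_zero.mpr (hrpos k₀).ne'
      exact mul_ne_zero h1 (mul_ne_zero h2 h2)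
  · have hempty : IsEmpty ι := not_nonempty_iff.mp hι
    haveI : IsEmpty ((k : ι) × Fin (p k) × Fin (p k)) := ⟨fun x => hempty.false x.1⟩
    refine ⟨B, 1, hON, hmemform, hspanB, ?_, ?_⟩
    · rw [Finset.univ_eq_empty, Finset.sum_empty]
      have hn0 : n = 0 := by
        by_contra hn
        exact hι ⟨(e.symm ⟨0, Nat.pos_of_ne_zero hn⟩).1⟩
      subst hn0
      apply Subsingleton.elim
    · intro hn
      exact absurd ⟨(e.symm ⟨0, hn⟩).1⟩ hι

end explicitSec

lemma eq_zero_of_trace_star_mul_self {n : ℕ} (M : Mat n) (h : (star M * M).trace = 0) :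
    M = 0 := by
  have h2 : ((∑ i, ∑ k, Complex.normSq (M k i) : ℝ) : ℂ) = 0 := by
    rw [← h]
    push_cast
    simp only [Matrix.trace, Matrix.diag, Matrix.mul_apply, Matrix.star_apply,
      Matrix.star_eq_conjTranspose, Matrix.conjTranspose_apply]
    refine Finset.sum_congr rfl fun i _ => Finset.sum_congr rfl fun k _ => ?_
    rw [Complex.normSq_eq_conj_mul_self]
    rfl
  have h3 : (∑ i, ∑ k, Complex.normSq (M k i) : ℝ) = 0 := by exact_mod_cast h2
  have h4 : ∀ i ∈ Finset.univ, ∀ k ∈ Finset.univ, Complex.normSq (M k i) = 0 := by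
    have h5 := (Finset.sum_eq_zero_iff_of_nonneg (fun i _ =>
      Finset.sum_nonneg (fun k _ => Complex.normSq_nonneg (M k i)))).mp h3
    intro i hi k hk
    exact (Finset.sum_eq_zero_iff_of_nonneg
      (fun k _ => Complex.normSq_nonneg (M k i))).mp (h5 i hi) k hk
  ext i j
  exact Complex.normSq_eq_zero.mp (h4 j (Finset.mem_univ j) i (Finset.mem_univ i))

/-- for a homogeneously balanced `𝒜` with Hilbert–Schmidt
orthonormal basis `A_1, …, A_N`, the trace-preserving expectation onto the
commutant `𝒜'` is `X ↦ (n/N) Σⱼ Aⱼ X Aⱼ*`. -/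
theorem stmt17 {n N : ℕ} (𝒜 : StarSubalgebra ℂ (Mat n)) (hhb : IsHomBalanced 𝒜)
    (A : Fin N → Mat n) (hA : ∀ j, A j ∈ 𝒜)
    (hON : ∀ i j, (star (A i) * A j).trace = if i = j then 1 else 0)
    (hsp : Submodule.span ℂ (Set.range A) = Subalgebra.toSubmodule 𝒜.toSubalgebra)
    (E : Mat n →ₗ[ℂ] Mat n)
    (hE : IsHSProj (Subalgebra.toSubmodule
      (Subalgebra.centralizer ℂ (𝒜 : Set (Mat n)))) E) :
    ∀ X : Mat n, E X = ((n : ℂ) / (N : ℂ)) • ∑ j, A j * X * star (A j) := by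
  intro X
  by_cases hn : n = 0
  · subst hn
    ext i j
    exact i.elim0
  -- main case
  obtain ⟨ι, hft, hde, p, q, e, U, hU1, hU2, hpq, hbal, hform⟩ := hhb
  letI := hft
  letI := hde
  obtain ⟨B, c, hONB, hmemB, hspanB, hsum, hc0⟩ := explicitBasis e U hU1 hU2 hpq hbal
  have hmem𝒜 : ∀ M : Mat n, M ∈ 𝒜 → M ∈ Submodule.span ℂ (Set.range A) := by
    intro M hM
    rw [hsp]
    exact hM
  have hBin𝒜 : ∀ x, B x ∈ 𝒜 := fun x => (hform _).mpr (hmemB x)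
  have hAspanB : ∀ j, A j ∈ Submodule.span ℂ (Set.range B) := by
    intro j
    obtain ⟨A', hA'⟩ := (hform _).mp (hA j)
    rw [hA']
    exact hspanB A'
  -- swap to explicit basis
  have hswap : ∀ Y : Mat n, ∑ j, A j * Y * star (A j) = ∑ x, B x * Y * star (B x) :=
    fun Y => basisIndep B A hONB hON hAspanB (fun x => hmem𝒜 _ (hBin𝒜 x)) Y
  -- star family
  have hONstar : ∀ i j, (star ((fun j => star (A j)) i) * (fun j => star (A j)) j).trace
      = if i = j then 1 else 0 := by
    intro i j
    simp only [star_star]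
    rw [Matrix.trace_mul_comm, hON]
    simp [eq_comm]
  have hstarspan : ∀ M : Mat n, M ∈ 𝒜 →
      M ∈ Submodule.span ℂ (Set.range (fun j => star (A j))) := by
    intro M hM
    have h1 : star M = ∑ j, (star (A j) * star M).trace • A j :=
      expandON A hON (hmem𝒜 _ (star_mem hM))
    have h2 : M = ∑ j, star ((star (A j) * star M).trace) • star (A j) := by
      conv_lhs => rw [← star_star M, h1]
      rw [star_sum]
      exact Finset.sum_congr rfl fun j _ => by rw [star_smul]
    rw [h2]
    exact Submodule.sum_mem _ fun j _ =>
      Submodule.smul_mem _ _ (Submodule.subset_span ⟨j, rfl⟩)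
  have hswapstar : ∀ Y : Mat n,
      ∑ j, star (A j) * Y * star (star (A j)) = ∑ j, A j * Y * star (A j) :=
    fun Y => basisIndep A (fun j => star (A j)) hON hONstar
      (fun i => hmem𝒜 _ (star_mem (hA i))) (fun j => hstarspan _ (hA j)) Y
  -- the two sums
  have hS1 : ∑ j, A j * star (A j) = c • 1 := by
    have := hswap 1
    simp only [Matrix.mul_one] at this
    rw [this, hsum]
  have hS2 : ∑ j, star (A j) * A j = c • 1 := by
    have := hswapstar 1
    simp only [Matrix.mul_one, star_star] at this
    rw [this]
    exact hS1
  -- trace identities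
  have hNc : (N : ℂ) = c * n := by
    have h1 : (∑ j, A j * star (A j)).trace = (N : ℂ) := by
      rw [trace_sum]
      have : ∀ j, (A j * star (A j)).trace = 1 := by
        intro j
        rw [Matrix.trace_mul_comm, hON]
        simp
      rw [Finset.sum_congr rfl fun j _ => this j]
      simp
    rw [← h1, hS1, Matrix.trace_smul, Matrix.trace_one]
    simp [mul_comm]
  have hnne : ((n : ℂ)) ≠ 0 := Nat.cast_ne_zero.mpr hn
  have hcne : c ≠ 0 := hc0 (Nat.pos_of_ne_zero hn)
  have hNne : ((N : ℂ)) ≠ 0 := by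
    rw [hNc]
    exact mul_ne_zero hcne hnne
  have hscal : ((n : ℂ) / (N : ℂ)) * c = 1 := by
    field_simp
    rw [hNc, mul_comm]
  -- centralizer membership
  have hcent : ∀ Y : Mat n,
      (∑ j, A j * Y * star (A j)) ∈ Subalgebra.centralizer ℂ (𝒜 : Set (Mat n)) := by
    intro Y
    rw [Subalgebra.mem_centralizer_iff]
    intro g hg
    exact commPhi 𝒜 A hA hON hsp hg Y
  set P : Mat n := ((n : ℂ) / (N : ℂ)) • ∑ j, A j * X * star (A j) with hP
  have hPmem : P ∈ Subalgebra.centralizer ℂ (𝒜 : Set (Mat n)) :=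
    Subalgebra.smul_mem _ (hcent X) _
  have hEXmem : E X ∈ Subalgebra.centralizer ℂ (𝒜 : Set (Mat n)) := hE.1 X
  -- fact 1
  have fact1 : ∀ M : Mat n, M ∈ Subalgebra.centralizer ℂ (𝒜 : Set (Mat n)) →
      (star (E X) * M).trace = (star X * M).trace := by
    intro M hM
    rw [hE.2.2 X M, hE.2.1 M hM]
  -- fact 2
  have fact2 : ∀ M : Mat n, M ∈ Subalgebra.centralizer ℂ (𝒜 : Set (Mat n)) →
      (star P * M).trace = (star X * M).trace := by
    intro M hM
    have hcomm : ∀ j, star (A j) * M = M * star (A j) := fun j =>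
      (Subalgebra.mem_centralizer_iff ℂ).mp hM (star (A j)) (star_mem (hA j))
    have hstarsum : star (∑ j, A j * X * star (A j)) = ∑ j, A j * star X * star (A j) := by
      rw [star_sum]
      refine Finset.sum_congr rfl fun j _ => ?_
      simp only [Matrix.star_mul, star_star, Matrix.mul_assoc]
    rw [hP, star_smul, smul_mul_assoc, Matrix.trace_smul, hstarsum, Finset.sum_mul, trace_sum]
    have hterm : ∀ j, ((A j * star X * star (A j)) * M).trace
        = ((star (A j) * A j) * (star X * M)).trace := by
      intro j
      rw [Matrix.mul_assoc (A j * star X) (star (A j)) M, hcomm j,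
        ← Matrix.mul_assoc, Matrix.trace_mul_comm]
      simp only [Matrix.mul_assoc]
    rw [Finset.sum_congr rfl fun j _ => hterm j, ← trace_sum, ← Finset.sum_mul, hS2,
      smul_mul_assoc, Matrix.one_mul, Matrix.trace_smul]
    rw [smul_eq_mul, smul_eq_mul, ← mul_assoc]
    have hconj : star ((n : ℂ) / (N : ℂ)) = (n : ℂ) / (N : ℂ) := by
      simp [Complex.star_def, map_div₀]
    rw [hconj, hscal, one_mul]
  -- putting it together
  have hzero : (star (E X - P) * (E X - P)).trace = 0 := by
    rw [star_sub, Matrix.sub_mul, Matrix.mul_sub, Matrix.mul_sub, trace_sub, trace_sub,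
      trace_sub, fact1 (E X) hEXmem, fact1 P hPmem, fact2 (E X) hEXmem, fact2 P hPmem]
    ring
  have := eq_zero_of_trace_star_mul_self _ hzero
  have hfin : E X = P := by
    have h := sub_eq_zero.mp this
    exact h
  rw [hfin]
end
end
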